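/- arXiv:2009.06583 — 15 statements merged into one kernel-verified Lean document; each statement's English description precedes it below -/
import Mathlib

section
/- If θ is a rational number, cos(πθ) ≠ 0, and tan(πθ) is rational, then tan(πθ) ∈ {0, 1, -1}. -/
open Polynomial

lemma aux_sq_ne_three (q : ℚ) : q ^ 2 ≠ 3 := by
  intro h
  have h3 : Irrational (Real.sqrt 3) := by
    simpa using (Nat.Prime.irrational_sqrt (p := 3) (by norm_num))
  apply h3
  refine ⟨|q|, ?_⟩
  have h2 : ((3 : ℚ) : ℝ) = ((q : ℝ)) ^ 2 := by exact_mod_cast h.symm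
  rw [show ((|q| : ℚ) : ℝ) = |(q : ℝ)| by push_cast; ring]
  rw [← Real.sqrt_sq_eq_abs, ← h2]
  norm_num

theorem rational_tan_values (θ : ℚ) (hc : Real.cos (Real.pi * θ) ≠ 0)
    (h : ∃ q : ℚ, Real.tan (Real.pi * θ) = q) :
    Real.tan (Real.pi * θ) ∈ ({0, 1, -1} : Set ℝ) := by
  obtain ⟨q, hq⟩ := h
  set x := Real.pi * θ with hx
  have hpyth : Real.sin x ^ 2 + Real.cos x ^ 2 = 1 := Real.sin_sq_add_cos_sq x
  have hqden : (1 : ℚ) + q ^ 2 ≠ 0 := by positivity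
  have hq' : (q : ℝ) = Real.sin x / Real.cos x := by
    rw [← Real.tan_eq_sin_div_cos, hq]
  set c : ℚ := 2 * (1 - q ^ 2) / (1 + q ^ 2) with hcdef
  have hkey : Real.cos (2 * x) = (c : ℝ) / 2 := by
    rw [Real.cos_two_mul, hcdef]
    push_cast
    field_simp [hq']
    have hs : (q : ℝ) ^ 2 * Real.cos x ^ 2 = Real.sin x ^ 2 := by
      rw [hq', div_pow]; field_simp
    linear_combination 2 * hpyth + 2 * hs
  -- c is an algebraic integer
  set z : ℂ := Complex.exp (2 * x * Complex.I) with hzdef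
  have hzpow : z ^ θ.den = 1 := by
    rw [hzdef, ← Complex.exp_nat_mul]
    have hstep : (θ.den : ℂ) * (2 * x * Complex.I) = (θ.num : ℂ) * (2 * Real.pi * Complex.I) := by
      have hd : (θ.den : ℚ) * θ = θ.num := Rat.den_mul_eq_num θ
      have hd' : (θ.den : ℂ) * (θ : ℂ) = (θ.num : ℂ) := by exact_mod_cast hd
      rw [hx]; push_cast
      linear_combination (2 * Real.pi * Complex.I) * hd'
    rw [hstep]
    exact Complex.exp_int_mul_two_pi_mul_I θ.num
  have hzne : z ≠ 0 := Complex.exp_ne_zero _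
  have hintz : IsIntegral ℤ z :=
    ⟨X ^ θ.den - C 1, monic_X_pow_sub_C 1 θ.den_nz, by simp [hzpow]⟩
  have hintzi : IsIntegral ℤ z⁻¹ :=
    ⟨X ^ θ.den - C 1, monic_X_pow_sub_C 1 θ.den_nz, by
      simp [inv_pow, hzpow]⟩
  have hcC : (c : ℂ) = z + z⁻¹ := by
    have h1 : z⁻¹ = Complex.exp (-(2 * x * Complex.I)) := by
      rw [hzdef, ← Complex.exp_neg]
    have h2 : z + z⁻¹ = 2 * Complex.cos (2 * (x : ℂ)) := by
      rw [h1, hzdef, Complex.two_cos]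
      ring_nf
    have h3 : Complex.cos (2 * (x : ℂ)) = ((Real.cos (2 * x) : ℝ) : ℂ) := by
      rw [Complex.ofReal_cos]
      push_cast
      ring_nf
    rw [h2, h3, hkey]
    push_cast
    ring
  have hintc : IsIntegral ℤ ((c : ℚ) : ℂ) := by
    rw [show ((c : ℚ) : ℂ) = (c : ℂ) from rfl, hcC]
    exact hintz.add hintzi
  have hintq : IsIntegral ℤ c := by
    rw [← isIntegral_algebraMap_iff (algebraMap ℚ ℂ).injective]
    rwa [show (algebraMap ℚ ℂ) c = (c : ℂ) from eq_ratCast _ c]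
  obtain ⟨m, hm⟩ := IsIntegrallyClosed.isIntegral_iff.mp hintq
  have hm' : (m : ℚ) = c := by exact_mod_cast hm
  -- bounds on m
  have hub : (c : ℝ) ≤ 2 := by
    have := Real.cos_le_one (2 * x)
    rw [hkey] at this; linarith
  have hlb : (-2 : ℝ) ≤ (c : ℝ) := by
    have := Real.neg_one_le_cos (2 * x)
    rw [hkey] at this; linarith
  have hmub : m ≤ 2 := by exact_mod_cast show (m : ℝ) ≤ 2 by rw [show ((m:ℤ):ℝ) = (c:ℝ) by exact_mod_cast hm']; exact hub
  have hmlb : -2 ≤ m := by exact_mod_cast show (-2:ℝ) ≤ (m : ℝ) by rw [show ((m:ℤ):ℝ) = (c:ℝ) by exact_mod_cast hm']; exact hlb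
  have hmm : (m : ℚ) * (1 + q ^ 2) = 2 * (1 - q ^ 2) := by
    rw [hm', hcdef]; field_simp
  have hqval : q = 0 ∨ q = 1 ∨ q = -1 := by
    interval_cases m <;> push_cast at hmm
    · exfalso; nlinarith [hmm]
    · exfalso
      exact aux_sq_ne_three q (by linarith)
    · have hq2 : q ^ 2 = 1 := by linarith
      have h0 : (q - 1) * (q + 1) = 0 := by linear_combination hq2
      rcases mul_eq_zero.mp h0 with h | h
      · right; left; linarith
      · right; right; linarith
    · exfalso
      apply aux_sq_ne_three (3 * q)
      have hq2 : q ^ 2 = 1 / 3 := by linarith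
      linear_combination 9 * hq2
    · have hq2 : q ^ 2 = 0 := by linarith
      left
      exact pow_eq_zero_iff two_ne_zero |>.mp hq2
  rw [hq]
  rcases hqval with h | h | h <;> simp [h]
end

section
/- If θ is a rational number, cos(πθ) ≠ 0, and tan(πθ)² is rational, then tan(πθ) ∈ {0, 1/√3, -1/√3, 1, -1, √3, -√3}. -/
lemma aux_int_of_rat_integral (q : ℚ) (hq : IsIntegral ℤ (q : ℂ)) : ∃ n : ℤ, (n : ℚ) = q := by
  have hinj : Function.Injective (algebraMap ℚ ℂ) := (algebraMap ℚ ℂ).injective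
  have : IsIntegral ℤ q := by
    rw [← isIntegral_algebraMap_iff (A := ℚ) (B := ℂ) (R := ℤ) hinj]
    convert hq using 1
    exact eq_ratCast (algebraMap ℚ ℂ) q
  exact IsIntegrallyClosed.isIntegral_iff.mp this

lemma aux_root_unity_integral (z : ℂ) (n : ℕ) (hn : 0 < n) (hz : z ^ n = 1) :
    IsIntegral ℤ z := by
  refine ⟨Polynomial.X ^ n - 1, ?_, ?_⟩
  · simpa using Polynomial.monic_X_pow_sub_C (1 : ℤ) (by omega)
  · simp [hz]

theorem rational_tan_sq_values (θ : ℚ) (hc : Real.cos (Real.pi * θ) ≠ 0)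
    (h : ∃ q : ℚ, Real.tan (Real.pi * θ) ^ 2 = q) :
    Real.tan (Real.pi * θ) ∈
      ({0, 1 / Real.sqrt 3, -(1 / Real.sqrt 3), 1, -1,
        Real.sqrt 3, -Real.sqrt 3} : Set ℝ) := by
  obtain ⟨q, hq⟩ := h
  set x := Real.pi * θ with hx
  have h1q : (0:ℝ) < 1 + q := by rw [← hq]; positivity
  have h1q' : (0:ℚ) < 1 + q := by exact_mod_cast h1q
  have hcx : Real.cos x ^ 2 ≠ 0 := pow_ne_zero _ hc
  have h2 : ((1:ℝ) + q) * Real.cos x ^ 2 = 1 := by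
    have := Real.inv_one_add_tan_sq hc
    rw [hq] at this
    field_simp at this
    linarith [this]
  have hcos2 : Real.cos (2 * x) = (1 - q) / (1 + q) := by
    rw [Real.cos_two_mul, eq_div_iff (by exact_mod_cast h1q'.ne')]
    nlinarith [h2]
  -- z = exp(2x·i) is a root of unity
  set z : ℂ := Complex.exp ((2 * x : ℝ) * Complex.I) with hz
  have hden : 0 < θ.den := θ.pos
  have hnd : (θ.den : ℂ) * (θ : ℂ) = (θ.num : ℂ) := by
    rw [Rat.cast_def]
    have hd : ((θ.den : ℚ) : ℂ) ≠ 0 := by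
      exact_mod_cast Nat.cast_ne_zero.mpr hden.ne'
    push_cast
    push_cast at hd
    field_simp
  have hzpow : z ^ θ.den = 1 := by
    rw [hz, ← Complex.exp_nat_mul]
    have key : (θ.den : ℂ) * ((2 * x : ℝ) * Complex.I)
        = (θ.num : ℤ) * (2 * Real.pi * Complex.I) := by
      rw [hx]
      push_cast
      linear_combination (2 * (Real.pi : ℂ) * Complex.I) * hnd
    rw [key, Complex.exp_int_mul_two_pi_mul_I]
  have hzint : IsIntegral ℤ z := aux_root_unity_integral z θ.den hden hzpow
  have hzinvint : IsIntegral ℤ z⁻¹ :=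
    aux_root_unity_integral z⁻¹ θ.den hden (by rw [inv_pow, hzpow, inv_one])
  -- z + z⁻¹ = 2 cos(2x)
  have hsum : z + z⁻¹ = ((2 * Real.cos (2 * x) : ℝ) : ℂ) := by
    rw [hz, ← Complex.exp_neg]
    push_cast
    rw [show -(2*(x:ℂ)*Complex.I) = -(2*(x:ℂ))*Complex.I by ring,
      ← Complex.two_cos]
  -- hence 2(1-q)/(1+q) is an algebraic integer and rational
  set r : ℚ := 2 * (1 - q) / (1 + q) with hr
  have hrval : ((r : ℚ) : ℝ) = 2 * Real.cos (2 * x) := by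
    rw [hcos2, hr]
    push_cast
    field_simp
  have hrint : IsIntegral ℤ ((r : ℚ) : ℂ) := by
    have : ((r : ℚ) : ℂ) = z + z⁻¹ := by
      rw [hsum]
      exact_mod_cast congrArg (fun y : ℝ => (y : ℂ)) hrval
    rw [this]
    exact hzint.add hzinvint
  obtain ⟨n, hn⟩ := aux_int_of_rat_integral r hrint
  -- bound n
  have hb1 : (n : ℝ) ≤ 2 := by
    have : ((n : ℚ) : ℝ) = 2 * Real.cos (2 * x) := by rw [hn]; exact hrval
    push_cast at this
    nlinarith [Real.cos_le_one (2 * x)]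
  have hb2 : (-2 : ℝ) < (n : ℝ) := by
    have : ((n : ℚ) : ℝ) = 2 * Real.cos (2 * x) := by rw [hn]; exact hrval
    push_cast at this
    have hcsq : 0 < Real.cos x ^ 2 := lt_of_le_of_ne (sq_nonneg _) (Ne.symm hcx)
    nlinarith [Real.cos_two_mul x]
  have hn1 : n ≤ 2 := by exact_mod_cast hb1
  have hn2 : -2 < n := by exact_mod_cast hb2
  -- from n, determine q
  have hqn : (n : ℚ) * (1 + q) = 2 * (1 - q) := by
    rw [hn, hr]
    field_simp
  -- each case
  set t := Real.tan x with ht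
  have htq : t ^ 2 = (q : ℝ) := hq
  have h3 : (Real.sqrt 3 : ℝ) ^ 2 = 3 := Real.sq_sqrt (by norm_num)
  interval_cases n
  · -- n = -1 : q = 3, t = ±√3
    have hq3 : q = 3 := by
      have : (-1 : ℚ) * (1 + q) = 2 * (1 - q) := by exact_mod_cast hqn
      linarith
    have : t ^ 2 = (Real.sqrt 3) ^ 2 := by rw [htq, hq3, h3]; norm_num
    rcases sq_eq_sq_iff_eq_or_eq_neg.mp this with h' | h'
    · right; right; right; right; right; left; exact h'
    · right; right; right; right; right; right; exact h'
  · -- n = 0 : q = 1, t = ±1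
    have hq1 : q = 1 := by
      have : (0 : ℚ) * (1 + q) = 2 * (1 - q) := by exact_mod_cast hqn
      linarith
    have : t ^ 2 = (1 : ℝ) ^ 2 := by rw [htq, hq1]; norm_num
    rcases sq_eq_sq_iff_eq_or_eq_neg.mp this with h' | h'
    · right; right; right; left; exact h'
    · right; right; right; right; left; exact h'
  · -- n = 1 : q = 1/3, t = ±1/√3
    have hq13 : q = 1 / 3 := by
      have : (1 : ℚ) * (1 + q) = 2 * (1 - q) := by exact_mod_cast hqn
      linarith
    have hs3 : Real.sqrt 3 ≠ 0 := by positivity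
    have : t ^ 2 = (1 / Real.sqrt 3) ^ 2 := by
      rw [htq, hq13, div_pow, h3]
      norm_num
    rcases sq_eq_sq_iff_eq_or_eq_neg.mp this with h' | h'
    · right; left; exact h'
    · right; right; left; exact h'
  · -- n = 2 : q = 0, t = 0
    have hq0 : q = 0 := by
      have : (2 : ℚ) * (1 + q) = 2 * (1 - q) := by exact_mod_cast hqn
      linarith
    left
    have : t ^ 2 = 0 := by rw [htq, hq0]; norm_num
    exact pow_eq_zero_iff (by norm_num) |>.mp this
end

section
/- Let N ≥ 3 be an integer and α a positive rational number such that α^(k/N) is irrational for every k with 1 ≤ k ≤ N − 1. Then for every positive integer m, the real N-th root α^(1/N) does not lie in the m-th cyclotomic field ℚ(ζ_m). -/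
open Polynomial IntermediateField

set_option synthInstance.maxHeartbeats 800000 in
set_option maxHeartbeats 1600000 in
theorem nth_root_not_in_cyclotomic (N : ℕ) (hN : 3 ≤ N) (α : ℚ) (hα : 0 < α)
    (hirr : ∀ k : ℕ, 1 ≤ k → k ≤ N - 1 → Irrational ((α : ℝ) ^ ((k : ℝ) / (N : ℝ))))
    (m : ℕ) (hm : 0 < m) (ζ : ℂ) (hζ : IsPrimitiveRoot ζ m) :
    (((α : ℝ) ^ ((1 : ℝ) / (N : ℝ)) : ℝ) : ℂ) ∉
      IntermediateField.adjoin ℚ ({ζ} : Set ℂ) := by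
  intro hmem
  have hαR : (0:ℝ) < (α:ℝ) := by exact_mod_cast hα
  set β : ℝ := (α:ℝ) ^ ((1:ℝ)/(N:ℝ)) with hβdef
  have hNR : ((N:ℝ)) ≠ 0 := by
    have : (0:ℕ) < N := by omega
    exact_mod_cast this.ne'
  have hβpos : 0 < β := Real.rpow_pos_of_pos hαR _
  have hβN : β ^ N = (α:ℝ) := by
    rw [hβdef, ← Real.rpow_natCast ((α:ℝ) ^ ((1:ℝ)/(N:ℝ))) N, ← Real.rpow_mul hαR.le]
    rw [one_div, inv_mul_cancel₀ hNR, Real.rpow_one]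
  have hirr1 : Irrational β := by
    have := hirr 1 le_rfl (by omega)
    rw [hβdef, one_div]
    simpa using this
  have hirr2 : Irrational (β ^ 2) := by
    have h2 : β ^ 2 = (α:ℝ) ^ (((2:ℕ):ℝ)/(N:ℝ)) := by
      rw [hβdef, ← Real.rpow_natCast ((α:ℝ) ^ ((1:ℝ)/(N:ℝ))) 2, ← Real.rpow_mul hαR.le]
      rw [one_div]
      push_cast
      ring_nf
    rw [h2]
    exact hirr 2 (by omega) (by omega)
  -- Setup L and instances
  set L : IntermediateField ℚ ℂ := IntermediateField.adjoin ℚ ({ζ} : Set ℂ) with hLdef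
  let n : ℕ+ := ⟨m, hm⟩
  have hζn : IsPrimitiveRoot ζ ((n : ℕ+) : ℕ) := hζ
  have hζint : IsIntegral ℚ ζ := by
    refine ⟨X ^ m - 1, monic_X_pow_sub_C _ (by omega), ?_⟩
    simp [hζ.pow_eq_one]
  have hST : L.toSubalgebra = Algebra.adjoin ℚ ({ζ} : Set ℂ) :=
    IntermediateField.adjoin_simple_toSubalgebra_of_isAlgebraic hζint.isAlgebraic
  haveI hcyc : IsCyclotomicExtension {(n:ℕ)} ℚ L := by
    have h1 := hζn.adjoin_isCyclotomicExtension ℚ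
    exact IsCyclotomicExtension.equiv _ _ _ (h := h1) (Subalgebra.equivOfEq _ _ hST.symm)
  haveI hfd : FiniteDimensional ℚ L := IsCyclotomicExtension.finiteDimensional {(n:ℕ)} ℚ L
  haveI hgal : IsGalois ℚ L := IsCyclotomicExtension.isGalois {(n:ℕ)} ℚ L
  have hcomm : ∀ σ τ : (L ≃ₐ[ℚ] L), σ * τ = τ * σ := by
    intro σ τ
    apply (IsCyclotomicExtension.zeta_spec (n:ℕ) ℚ L).autToPow_injective ℚ
    rw [map_mul, map_mul, mul_comm]
  -- the element and its minimal polynomial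
  set b : ℂ := ((β:ℝ):ℂ) with hbdef
  have hbmem : b ∈ L := hmem
  set x : L := ⟨b, hbmem⟩ with hxdef
  have hbx : algebraMap L ℂ x = b := rfl
  have hxint : IsIntegral ℚ x := IsIntegral.of_finite ℚ x
  set g : ℚ[X] := minpoly ℚ x with hgdef
  have hgb : minpoly ℚ b = g := by
    rw [hgdef, ← hbx, minpoly.algebraMap_eq (algebraMap L ℂ).injective]
  have hbint : IsIntegral ℚ b := by
    rw [← hbx]; exact hxint.map (IsScalarTower.toAlgHom ℚ L ℂ)
  have hgirr : Irreducible g := minpoly.irreducible hxint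
  have hgmonic : g.Monic := minpoly.monic hxint
  have haevalb : (Polynomial.aeval b) g = 0 := by
    rw [← hgb]; exact minpoly.aeval ℚ b
  have hbN : b ^ N = ((α:ℚ):ℂ) := by
    rw [hbdef]
    norm_cast
  have hdvd : g ∣ (X ^ N - C α) := by
    rw [← hgb]
    apply minpoly.dvd ℚ b
    simp [hbN]
  set R : Multiset ℂ := (g.map (algebraMap ℚ ℂ)).roots with hRdef
  have hg0 : g ≠ 0 := hgmonic.ne_zero
  have hmap0 : g.map (algebraMap ℚ ℂ) ≠ 0 :=
    (Polynomial.map_ne_zero_iff (algebraMap ℚ ℂ).injective).2 hg0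
  have hrootsg : ∀ γ ∈ R, (Polynomial.aeval γ) g = 0 := by
    intro γ hγ
    have h2 := (Polynomial.mem_roots hmap0).1 hγ
    rwa [Polynomial.IsRoot, Polynomial.eval_map, ← Polynomial.aeval_def] at h2
  have hrootsN : ∀ γ ∈ R, γ ^ N = ((α:ℚ):ℂ) := by
    intro γ hγ
    obtain ⟨q, hq⟩ := hdvd
    have h3 : (Polynomial.aeval γ) (X ^ N - C α : ℚ[X]) = 0 := by
      rw [hq, map_mul, hrootsg γ hγ, zero_mul]
    simpa [sub_eq_zero] using h3
  have hbR : b ∈ R := by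
    rw [hRdef, Polynomial.mem_roots hmap0]
    rw [Polynomial.IsRoot, Polynomial.eval_map, ← Polynomial.aeval_def, haevalb]
  have hsep : g.Separable := hgirr.separable
  have hnodup : R.Nodup := Polynomial.nodup_roots (hsep.map (f := algebraMap ℚ ℂ))
  have hcard : R.card = g.natDegree :=
    (IsAlgClosed.splits (g.map (algebraMap ℚ ℂ))).natDegree_eq_card_roots.symm.trans
      (Polynomial.natDegree_map _)
  have hbne : b ≠ -b := by
    rw [hbdef]
    intro h
    have : β = -β := by exact_mod_cast h
    linarith
  have hnonreal : ∃ γ ∈ R, γ.im ≠ 0 := by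
    by_contra hno
    push_neg at hno
    have hsub : ∀ γ ∈ R, γ = b ∨ γ = -b := by
      intro γ hγ
      have him : γ.im = 0 := hno γ hγ
      have hre : γ = ((γ.re : ℝ) : ℂ) := Complex.ext rfl (by simp [him])
      have hγN := hrootsN γ hγ
      have hrN : (γ.re) ^ N = (α:ℝ) := by
        have h4 : (((γ.re)^N : ℝ) : ℂ) = ((α:ℝ):ℂ) := by
          push_cast
          rw [← hre, hγN]
        exact_mod_cast h4
      have habs : |γ.re| = β := by
        have h1 : |γ.re| ^ N = β ^ N := by
          rw [← abs_pow, hrN, hβN, abs_of_pos hαR]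
        exact pow_left_inj₀ (abs_nonneg _) hβpos.le (by omega) |>.1 h1
      rcases (abs_eq hβpos.le).1 habs with h | h
      · left; rw [hre, h, hbdef]
      · right; rw [hre, h, hbdef]; push_cast; ring
    have hcard2 : g.natDegree ≤ 2 := by
      rw [← hcard]
      have hss : R.toFinset ⊆ ({b, -b} : Finset ℂ) := by
        intro γ hγ
        rcases hsub γ (Multiset.mem_toFinset.1 hγ) with h | h <;> simp [h]
      calc R.card = R.toFinset.card := (Multiset.toFinset_card_of_nodup hnodup).symm
        _ ≤ ({b, -b} : Finset ℂ).card := Finset.card_le_card hss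
        _ ≤ 2 := Finset.card_insert_le b {-b} |>.trans (by simp)
    have hdeg1 : 1 ≤ g.natDegree := minpoly.natDegree_pos hxint
    interval_cases hd : g.natDegree
    · -- degree 1 : β rational
      have hx1 : x ∈ (algebraMap ℚ L).range := minpoly.natDegree_eq_one_iff.1 hd
      obtain ⟨q, hq⟩ := hx1
      apply hirr1
      refine ⟨q, ?_⟩
      have h5 : b = ((q:ℝ):ℂ) := by
        rw [← hbx, ← hq, ← IsScalarTower.algebraMap_apply, eq_ratCast,
          Complex.ofReal_ratCast]
      rw [hbdef] at h5
      exact_mod_cast h5.symm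
    · -- degree 2 : β² rational
      have hss : R.toFinset ⊆ ({b, -b} : Finset ℂ) := by
        intro γ hγ
        rcases hsub γ (Multiset.mem_toFinset.1 hγ) with h | h <;> simp [h]
      have hcards : ({b, -b} : Finset ℂ).card = 2 := by
        rw [Finset.card_insert_of_notMem (by simpa using hbne), Finset.card_singleton]
      have htf : R.toFinset = ({b, -b} : Finset ℂ) := by
        apply Finset.eq_of_subset_of_card_le hss
        rw [hcards, Multiset.toFinset_card_of_nodup hnodup, hcard]
      have hR2 : R = {b, -b} := by
        have h6 : R.toFinset.val = R := Multiset.toFinset_val R ▸ (Multiset.dedup_eq_self.2 hnodup)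
        rw [← h6, htf]
        rw [Finset.insert_val_of_notMem (by simpa using hbne)]
        rfl
      have hsplitsC : (g.map (algebraMap ℚ ℂ)).Splits :=
        IsAlgClosed.splits _
      have hfact : g.map (algebraMap ℚ ℂ) = (X - C b) * (X - C (-b)) := by
        have h7 := hsplitsC.eq_prod_roots_of_monic (hgmonic.map _)
        rw [← hRdef, hR2] at h7
        simpa using h7
      have hconst : ((g.coeff 0 : ℚ) : ℂ) = - (b * b) := by
        have h8 := congrArg (Polynomial.eval 0) hfact
        rw [Polynomial.eval_map] at h8
        simpa [Polynomial.eval₂_at_zero, Polynomial.coeff_zero_eq_eval_zero] using h8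
      apply hirr2
      refine ⟨-(g.coeff 0), ?_⟩
      have h9 : ((β^2 : ℝ) : ℂ) = (((-(g.coeff 0) : ℚ) : ℝ) : ℂ) := by
        push_cast
        rw [hconst, neg_neg, hbdef]
        ring
      exact_mod_cast h9.symm
  obtain ⟨γ, hγR, hγim⟩ := hnonreal
  have hsplits : (g.map (algebraMap ℚ L)).Splits := by
    have h1 := Normal.splits (inferInstance : Normal ℚ ↥L) x
    exact h1
  have hmapmap : g.map (algebraMap ℚ ℂ) = (g.map (algebraMap ℚ L)).map (algebraMap L ℂ) := by
    rw [Polynomial.map_map, ← IsScalarTower.algebraMap_eq]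
  have hRL : R = ((g.map (algebraMap ℚ L)).roots).map (algebraMap L ℂ) := by
    rw [hRdef, hmapmap, hsplits.roots_map (algebraMap L ℂ)]
  obtain ⟨y, hyR, hyγ⟩ := Multiset.mem_map.1 (by rw [← hRL]; exact hγR)
  have haevaly : (Polynomial.aeval y) g = 0 := by
    have h2 := (Polynomial.mem_roots (p := g.map (algebraMap ℚ L))
      ((Polynomial.map_ne_zero_iff (algebraMap ℚ L).injective).2 hg0)).1 hyR
    rwa [Polynomial.IsRoot, Polynomial.eval_map, ← Polynomial.aeval_def] at h2
  -- build σ : L ≃ₐ[ℚ] L with σ x = y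
  let pb : PowerBasis ℚ (↥ℚ⟮x⟯) := IntermediateField.adjoin.powerBasis hxint
  have hpbgen : minpoly ℚ pb.gen = g := by
    rw [IntermediateField.adjoin.powerBasis_gen]
    exact (IntermediateField.minpoly_gen ℚ x).trans hgdef.symm
  let φ0 : (↥ℚ⟮x⟯) →ₐ[ℚ] ↥L := pb.lift y (by rw [hpbgen]; exact haevaly)
  let ψ : ↥L →ₐ[ℚ] ↥L := φ0.liftNormal ↥L
  have hψx : ψ x = y := by
    have h3 := AlgHom.liftNormal_commutes φ0 ↥L pb.gen
    rw [PowerBasis.lift_gen] at h3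
    have h4 : (algebraMap (↥ℚ⟮x⟯) ↥L) pb.gen = x := by
      rw [IntermediateField.adjoin.powerBasis_gen,
        IntermediateField.AdjoinSimple.algebraMap_gen]
    rwa [h4] at h3
  let σ : ↥L ≃ₐ[ℚ] ↥L := AlgEquiv.ofBijective ψ ψ.bijective
  have hσx : σ x = y := hψx
  -- complex conjugation restricted to L
  let cc : ℂ ≃ₐ[ℚ] ℂ := Complex.conjAe.restrictScalars ℚ
  let c : ↥L ≃ₐ[ℚ] ↥L := cc.restrictNormal ↥L
  have hcz : ∀ z : ↥L, (algebraMap ↥L ℂ) (c z) = (starRingEnd ℂ) ((algebraMap ↥L ℂ) z) := by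
    intro z
    have h5 := AlgEquiv.restrictNormal_commutes cc ↥L z
    exact h5
  have hcx : c x = x := by
    apply Subtype.ext
    have h6 := hcz x
    rw [hbx] at h6
    rw [show ((c x : ℂ)) = (algebraMap ↥L ℂ) (c x) from rfl, h6]
    exact Complex.conj_ofReal β
  have hcy : c y = y := by
    have h7 : c (σ x) = σ (c x) := by
      calc c (σ x) = (c * σ) x := rfl
        _ = (σ * c) x := by rw [hcomm]
        _ = σ (c x) := rfl
    rwa [hσx, hcx, hσx] at h7
  have hconjγ : (starRingEnd ℂ) γ = γ := by
    rw [← hyγ, ← hcz y, hcy]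
  exact hγim (Complex.conj_eq_iff_im.1 hconjγ)
end

section
/- Let N ≥ 3 be an integer. There is no rational number θ such that cos(πθ)^k is irrational for every k with 1 ≤ k ≤ N − 1 and cos(πθ)^N is rational. -/
open Polynomial

theorem no_cos_pow_rational (N : ℕ) (hN : 3 ≤ N) :
    ¬ ∃ θ : ℚ, (∀ k : ℕ, 1 ≤ k → k ≤ N - 1 → Irrational (Real.cos (Real.pi * θ) ^ k)) ∧
      (∃ q : ℚ, Real.cos (Real.pi * θ) ^ N = q) := by
  rintro ⟨θ, hirr, q, hq⟩
  set c : ℝ := Real.cos (Real.pi * θ) with hcdef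
  have h1 : Irrational c := by simpa using hirr 1 le_rfl (by omega)
  have h2 : Irrational (c ^ 2) := hirr 2 (by omega) (by omega)
  have hNne : N ≠ 0 := by omega
  -- c is integral over ℚ
  have haev : (Polynomial.aeval c) ((X : ℚ[X]) ^ N - C q) = 0 := by
    simp [hq]
  have hint : IsIntegral ℚ c :=
    ⟨(X : ℚ[X]) ^ N - C q, monic_X_pow_sub_C q hNne, haev⟩
  set p : ℚ[X] := minpoly ℚ c with hpdef
  have hpne : p ≠ 0 := minpoly.ne_zero hint
  have hdvd1 : p ∣ (X : ℚ[X]) ^ N - C q := minpoly.dvd ℚ c haev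
  -- Chebyshev polynomial annihilates c
  set n : ℕ := θ.den with hndef
  have hnpos : 0 < n := θ.pos
  have hTcheb : (Polynomial.Chebyshev.T ℝ n).eval c = Real.cos ((n : ℝ) * (Real.pi * θ)) :=
    Polynomial.Chebyshev.T_real_cos (Real.pi * θ) n
  have hnum : ((n : ℝ) * (Real.pi * θ)) = (θ.num : ℝ) * Real.pi := by
    have h0 : ((θ.den : ℚ)) * θ = (θ.num : ℚ) := by
      rw [mul_comm]; exact_mod_cast Rat.mul_den_eq_num θ
    have h' : ((θ.den : ℝ)) * (θ : ℝ) = (θ.num : ℝ) := by exact_mod_cast congrArg (Rat.cast : ℚ → ℝ) h0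
    show ((θ.den : ℝ)) * (Real.pi * θ) = (θ.num : ℝ) * Real.pi
    linear_combination Real.pi * h'
  have hcos2 : (Polynomial.Chebyshev.T ℝ n).eval c ^ 2 = 1 := by
    rw [hTcheb, hnum]
    have hs : Real.sin ((θ.num : ℝ) * Real.pi) = 0 := Real.sin_int_mul_pi θ.num
    nlinarith [Real.sin_sq_add_cos_sq ((θ.num : ℝ) * Real.pi)]
  have haev2 : (Polynomial.aeval c) ((Polynomial.Chebyshev.T ℚ n) ^ 2 - 1) = 0 := by
    have : (Polynomial.aeval c) (Polynomial.Chebyshev.T ℚ n)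
        = (Polynomial.Chebyshev.T ℝ n).eval c := by
      rw [aeval_def, eval₂_eq_eval_map, Polynomial.Chebyshev.map_T]
    simp [this, hcos2]
  have hdvd2 : p ∣ (Polynomial.Chebyshev.T ℚ n) ^ 2 - 1 := minpoly.dvd ℚ c haev2
  -- roots of p over ℂ
  set P : ℂ[X] := p.map (algebraMap ℚ ℂ) with hPdef
  have hPne : P ≠ 0 := (Polynomial.map_ne_zero_iff (algebraMap ℚ ℂ).injective).mpr hpne
  have hroots_eq : ∀ z ∈ P.roots, z = (c : ℂ) ∨ z = -(c : ℂ) := by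
    intro z hz
    have hz0 : P.eval z = 0 := (Polynomial.mem_roots hPne).mp hz
    -- z^N = q
    have hzN : z ^ N = (q : ℂ) := by
      obtain ⟨t, ht⟩ := hdvd1
      have : ((X : ℚ[X]) ^ N - C q).map (algebraMap ℚ ℂ) = P * t.map (algebraMap ℚ ℂ) := by
        rw [ht, Polynomial.map_mul]
      have := congrArg (Polynomial.eval z) this
      simp [hz0] at this
      linear_combination this
    -- z is real: z = cos(kπ/n)
    have hzT : (Polynomial.Chebyshev.T ℂ n).eval z ^ 2 = 1 := by
      obtain ⟨t, ht⟩ := hdvd2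
      have : ((Polynomial.Chebyshev.T ℚ n) ^ 2 - 1).map (algebraMap ℚ ℂ)
          = P * t.map (algebraMap ℚ ℂ) := by rw [ht, Polynomial.map_mul]
      rw [Polynomial.map_sub, Polynomial.map_pow, Polynomial.Chebyshev.map_T,
        Polynomial.map_one] at this
      have := congrArg (Polynomial.eval z) this
      simp [hz0] at this
      linear_combination this
    obtain ⟨w, hw⟩ := Complex.cos_surjective z
    rw [← hw, Polynomial.Chebyshev.T_complex_cos] at hzT
    have hsin : Complex.sin ((n : ℂ) * w) = 0 := by
      have := Complex.sin_sq_add_cos_sq ((n : ℂ) * w)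
      have hs2 : Complex.sin ((n : ℂ) * w) ^ 2 = 0 := by linear_combination this - hzT
      exact pow_eq_zero_iff (n := 2) (by norm_num) |>.mp hs2
    obtain ⟨k, hk⟩ := Complex.sin_eq_zero_iff.mp hsin
    have hw' : w = ((k * Real.pi / n : ℝ) : ℂ) := by
      have hn0 : (n : ℂ) ≠ 0 := Nat.cast_ne_zero.mpr (by omega)
      push_cast
      rw [eq_div_iff hn0]
      linear_combination hk
    set r : ℝ := Real.cos (k * Real.pi / n) with hrdef
    have hzr : z = (r : ℂ) := by rw [← hw, hw', Complex.ofReal_cos]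
    -- r^N = q
    have hrN : r ^ N = (q : ℝ) := by
      have : ((r : ℂ)) ^ N = ((q : ℝ) : ℂ) := by
        rw [← hzr, hzN]; norm_num
      exact_mod_cast this
    have habs : |r| = |c| := by
      have h1' : |r| ^ N = |c| ^ N := by
        rw [← abs_pow, ← abs_pow, hrN, hq]
      exact (pow_left_inj₀ (abs_nonneg r) (abs_nonneg c) hNne).mp h1'
    rcases abs_eq_abs.mp habs with h | h
    · left; rw [hzr, h]
    · right; rw [hzr, h]; norm_num
  -- degree bounds
  have hsep : P.Separable :=
    ((minpoly.irreducible hint).separable).map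
  have hnodup : P.roots.Nodup := Polynomial.nodup_roots hsep
  have hcard : p.natDegree = Multiset.card P.roots :=
    (IsAlgClosed.card_roots_map_eq_natDegree_from_simpleRing (algebraMap ℚ ℂ) p).symm
  have hsub : P.roots.toFinset ⊆ ({(c : ℂ), -(c : ℂ)} : Finset ℂ) := by
    intro z hz
    rcases hroots_eq z (Multiset.mem_toFinset.mp hz) with h | h <;> simp [h]
  have hdle : p.natDegree ≤ 2 := by
    rw [hcard, ← Multiset.toFinset_card_of_nodup hnodup]
    calc P.roots.toFinset.card ≤ ({(c : ℂ), -(c : ℂ)} : Finset ℂ).card :=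
          Finset.card_le_card hsub
      _ ≤ 2 := Finset.card_insert_le _ _ |>.trans (by simp)
  have hdpos : 0 < p.natDegree := minpoly.natDegree_pos hint
  -- real map
  set PR : ℝ[X] := p.map (algebraMap ℚ ℝ) with hPRdef
  have hPRdeg : PR.natDegree = p.natDegree := p.natDegree_map (algebraMap ℚ ℝ)
  have hPRmonic : PR.Monic := (minpoly.monic hint).map _
  have hevalc : PR.eval c = 0 := by
    rw [← Polynomial.eval₂_eq_eval_map, ← aeval_def]
    exact minpoly.aeval ℚ c
  have hd12 : p.natDegree = 1 ∨ p.natDegree = 2 := by omega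
  rcases hd12 with hd | hd
  · -- degree 1 : c rational
    have hdeg1 : PR.natDegree = 1 := by rw [hPRdeg, hd]
    have hc1 : PR.coeff 1 = 1 := by
      have := hPRmonic
      rwa [Polynomial.Monic, Polynomial.leadingCoeff, hdeg1] at this
    have heval : PR.eval c = PR.coeff 0 + PR.coeff 1 * c := by
      rw [Polynomial.eval_eq_sum_range, hdeg1]
      simp [Finset.sum_range_succ]
      try ring
    have : c = ((-p.coeff 0 : ℚ) : ℝ) := by
      rw [heval, hc1] at hevalc
      have h0 : PR.coeff 0 = ((p.coeff 0 : ℚ) : ℝ) := by simp [hPRdef, Polynomial.coeff_map]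
      push_cast
      rw [h0] at hevalc
      linarith
    exact h1 ⟨-p.coeff 0, this.symm⟩
  · -- degree 2 : c^2 rational
    have hdeg2 : PR.natDegree = 2 := by rw [hPRdeg, hd]
    -- -c is also a root: both c and -c in roots of P
    have hcmem : (c : ℂ) ∈ P.roots := by
      rw [Polynomial.mem_roots hPne]
      show P.eval ((c : ℝ) : ℂ) = 0
      have h4 : (Polynomial.aeval c) p = 0 := by rw [hpdef]; exact minpoly.aeval ℚ c
      have h3 := Polynomial.aeval_algebraMap_apply ℂ (c : ℝ) p
      rw [h4, map_zero, show (algebraMap ℝ ℂ) c = ((c : ℝ) : ℂ) from rfl, aeval_def,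
        eval₂_eq_eval_map, ← hPdef] at h3
      exact h3
    have hcne : (c : ℂ) ≠ -(c : ℂ) := by
      intro h
      have h20 : (2 : ℂ) * (c : ℂ) = 0 := by linear_combination h
      have hc0' : (c : ℂ) = 0 := by
        rcases mul_eq_zero.mp h20 with h' | h'
        · norm_num at h'
        · exact h'
      have hc0 : c = 0 := by exact_mod_cast hc0'
      exact h1 ⟨0, by simp [hc0]⟩
    have hnegmem : -(c : ℂ) ∈ P.roots := by
      obtain ⟨a, b, hab⟩ := Multiset.card_eq_two.mp (by rw [← hcard, hd] : Multiset.card P.roots = 2)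
      have hane : a ≠ b := by
        intro h; rw [hab, h] at hnodup; simp at hnodup
      have ha := hroots_eq a (by rw [hab]; simp)
      have hb := hroots_eq b (by rw [hab]; simp)
      rw [hab]
      rcases ha with ha | ha <;> rcases hb with hb | hb
      · exact absurd (ha.trans hb.symm) hane
      · simp [hb]
      · simp [ha]
      · exact absurd (ha.trans hb.symm) hane
    have hevalnegc : PR.eval (-c) = 0 := by
      have h0 : P.eval ((-c : ℝ) : ℂ) = 0 := by
        rw [Complex.ofReal_neg]
        exact (Polynomial.mem_roots hPne).mp hnegmem
      have h3 := Polynomial.aeval_algebraMap_apply ℂ (-c : ℝ) p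
      rw [show (algebraMap ℝ ℂ) (-c : ℝ) = ((-c : ℝ) : ℂ) from rfl, aeval_def,
        eval₂_eq_eval_map, ← hPdef, h0] at h3
      have h5 : (Polynomial.aeval (-c : ℝ)) p = 0 := by
        have h6 := h3.symm
        rw [show (algebraMap ℝ ℂ) ((Polynomial.aeval (-c : ℝ)) p)
            = (((Polynomial.aeval (-c : ℝ)) p : ℝ) : ℂ) from rfl] at h6
        exact_mod_cast h6
      rwa [aeval_def, eval₂_eq_eval_map, ← hPRdef] at h5
    -- quadratic: eval formula
    have hc2 : PR.coeff 2 = 1 := by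
      have := hPRmonic
      rwa [Polynomial.Monic, Polynomial.leadingCoeff, hdeg2] at this
    have heval : ∀ x : ℝ, PR.eval x = PR.coeff 0 + PR.coeff 1 * x + PR.coeff 2 * x ^ 2 := by
      intro x
      rw [Polynomial.eval_eq_sum_range, hdeg2]
      simp [Finset.sum_range_succ]
      try ring
    have hkey : c ^ 2 = ((-p.coeff 0 : ℚ) : ℝ) := by
      have e1 := hevalc; rw [heval c, hc2] at e1
      have e2 := hevalnegc; rw [heval (-c), hc2] at e2
      have h0 : PR.coeff 0 = ((p.coeff 0 : ℚ) : ℝ) := by simp [hPRdef, Polynomial.coeff_map]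
      push_cast
      rw [h0] at e1 e2
      nlinarith [e1, e2]
    exact h2 ⟨-p.coeff 0, hkey.symm⟩
end

section
/- Let N ≥ 3 be an integer. There is no rational number θ with cos(πθ) ≠ 0 such that tan(πθ)^k is irrational for every k with 1 ≤ k ≤ N − 1 and tan(πθ)^N is rational. -/
open Polynomial IntermediateField
set_option synthInstance.maxHeartbeats 1000000
set_option maxHeartbeats 2000000

-- Step 1: purely complex lemma: conjugate relation forces r real
lemma conj_fix {n : ℕ} (hn : n ≠ 0) {w j r : ℂ} (hw : w ^ n = 1) (hj : j ^ 2 = -1)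
    (h : w - 1 = j * r * (w + 1)) : (starRingEnd ℂ) r = r := by
  have hw0 : w ≠ 0 := by
    intro h0; rw [h0, zero_pow hn] at hw; exact zero_ne_one hw
  have habs : ‖w‖ = 1 := by
    have h1 : ‖w‖ ^ n = 1 := by rw [← norm_pow, hw, norm_one]
    have := norm_nonneg w
    rcases (pow_eq_one_iff_cases).1 h1 with h' | h' | h' <;> first | omega | exact h' | linarith [h'.1]
  have hconjw : (starRingEnd ℂ) w = w⁻¹ := (Complex.inv_eq_conj habs).symm
  have hwne : w + 1 ≠ 0 := by
    intro h0
    have hw1 : w = -1 := by linear_combination h0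
    rw [hw1] at h
    simp at h
    norm_num at h
  have hj0 : j ≠ 0 := by intro h0; rw [h0] at hj; norm_num at hj
  have hconjj : (starRingEnd ℂ) j = -j := by
    have hfac : (j - Complex.I) * (j + Complex.I) = 0 := by
      have := Complex.I_sq; linear_combination hj - this
    rcases mul_eq_zero.1 hfac with h' | h'
    · have : j = Complex.I := by linear_combination h'
      rw [this, Complex.conj_I]
    · have : j = -Complex.I := by linear_combination h'
      rw [this]; simp [Complex.conj_I]
  have h2 := congrArg (starRingEnd ℂ) h
  simp only [map_sub, map_mul, map_add, map_one, hconjw, hconjj] at h2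
  -- h2 : w⁻¹ - 1 = -j * conj r * (w⁻¹ + 1)
  have h3 : w - 1 = j * ((starRingEnd ℂ) r) * (w + 1) := by
    have hinv : w * w⁻¹ = 1 := mul_inv_cancel₀ hw0
    linear_combination (-w) * h2 + (1 + j * ((starRingEnd ℂ) r)) * hinv
  have := h3.symm.trans h
  have h4 : (j * (w + 1)) * ((starRingEnd ℂ) r) = (j * (w + 1)) * r := by linear_combination this
  exact mul_left_cancel₀ (mul_ne_zero hj0 hwne) h4

lemma root_pm {t : ℝ} {z : ℂ} {n N : ℕ} (hn : n ≠ 0) (hN : N ≠ 0) (hz : z ^ n = 1)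
    (hrel : z - 1 = Complex.I * (t : ℂ) * (z + 1)) {q : ℚ} (htN : t ^ N = (q : ℝ))
    (ht0 : t ≠ 0) {r : ℂ} (hr : r ∈ (minpoly ℚ ((t : ℂ))).aroots ℂ) :
    r = (t : ℂ) ∨ r = -(t : ℂ) := by
  have htNC : ((t : ℂ)) ^ N = ((q : ℚ) : ℂ) := by
    have := congrArg (fun x : ℝ => (x : ℂ)) htN
    push_cast at this
    exact this
  have ht : IsIntegral ℚ ((t : ℂ)) := by
    refine ⟨X ^ N - C q, monic_X_pow_sub_C q hN, ?_⟩
    simp [htNC]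
  have hzi : IsIntegral ℚ z := by
    refine ⟨X ^ n - C 1, monic_X_pow_sub_C 1 hn, ?_⟩
    simp [hz]
  have hIi : IsIntegral ℚ Complex.I := by
    refine ⟨X ^ 2 - C (-1), monic_X_pow_sub_C (-1) two_ne_zero, ?_⟩
    simp [Complex.I_sq]
  set p : Polynomial ℚ := minpoly ℚ ((t : ℂ)) with hp
  haveI : Fact (Irreducible p) := Fact.mk (minpoly.irreducible ht)
  have hraev : aeval r p = 0 := (mem_aroots.1 hr).2
  set E : IntermediateField ℚ ℂ := adjoin ℚ ({(t : ℂ), z, Complex.I} : Set ℂ) with hE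
  haveI : FiniteDimensional ℚ E := by
    apply finiteDimensional_adjoin
    intro x hx
    simp only [Set.mem_insert_iff, Set.mem_singleton_iff] at hx
    rcases hx with h | h | h <;> subst h <;> assumption
  have htmem : (t : ℂ) ∈ E := subset_adjoin ℚ _ (by simp)
  have hzmem : z ∈ E := subset_adjoin ℚ _ (by simp)
  have hImem : Complex.I ∈ E := subset_adjoin ℚ _ (by simp)
  set tE : E := ⟨(t : ℂ), htmem⟩ with htE
  set zE : E := ⟨z, hzmem⟩ with hzEdef
  set iE : E := ⟨Complex.I, hImem⟩ with hiEdef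
  set K := AdjoinRoot p with hK
  have haevtE : aeval tE p = 0 := by
    have hinj : Function.Injective (algebraMap E ℂ) := Subtype.val_injective
    apply hinj
    rw [map_zero, ← aeval_algebraMap_apply]
    have : (algebraMap E ℂ) tE = (t : ℂ) := rfl
    rw [this]
    exact minpoly.aeval ℚ ((t : ℂ))
  let g : K →ₐ[ℚ] E := AdjoinRoot.liftAlgHom p (Algebra.ofId ℚ E) tE haevtE
  let φ0 : K →ₐ[ℚ] ℂ := AdjoinRoot.liftAlgHom p (Algebra.ofId ℚ ℂ) r hraev
  letI : Algebra K ℂ := φ0.toRingHom.toAlgebra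
  letI : Algebra K E := g.toRingHom.toAlgebra
  haveI : IsScalarTower ℚ K E :=
    IsScalarTower.of_algebraMap_eq' (RingHom.ext fun x => (g.commutes x).symm)
  haveI : Algebra.IsAlgebraic K E := by
    haveI : Algebra.IsAlgebraic ℚ E := Algebra.IsAlgebraic.of_finite ℚ E
    exact Algebra.IsAlgebraic.tower_top (K := ℚ) K
  haveI : Module.IsTorsionFree K ℂ :=
    (Module.isTorsionFree_iff_algebraMap_injective (R := K) (A := ℂ)).2 φ0.toRingHom.injective
  let ψ : E →ₐ[K] ℂ := IsAlgClosed.lift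
  have hψt : ψ tE = r := by
    have h1 : tE = algebraMap K E (AdjoinRoot.root p) := by
      show tE = g (AdjoinRoot.root p)
      exact (AdjoinRoot.liftAlgHom_root p (Algebra.ofId ℚ E) tE haevtE).symm
    rw [h1, ψ.commutes]
    show φ0 (AdjoinRoot.root p) = r
    exact AdjoinRoot.liftAlgHom_root p (Algebra.ofId ℚ ℂ) r hraev
  have hrelE : zE - 1 = iE * tE * (zE + 1) := by
    apply Subtype.ext
    push_cast
    exact hrel
  have hzE : zE ^ n = 1 := by apply Subtype.ext; push_cast; exact hz
  have hiE : iE ^ 2 = -1 := by apply Subtype.ext; push_cast; exact Complex.I_sq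
  have hrel2 : ψ zE - 1 = ψ iE * r * (ψ zE + 1) := by
    have := congrArg ψ hrelE
    simpa [map_sub, map_mul, map_add, hψt] using this
  have hw : (ψ zE) ^ n = 1 := by rw [← map_pow, hzE, map_one]
  have hj : (ψ iE) ^ 2 = -1 := by
    rw [← map_pow, hiE]; simp
  have hconj : (starRingEnd ℂ) r = r := conj_fix hn hw hj hrel2
  -- r is real
  obtain ⟨s, hs⟩ := Complex.conj_eq_iff_real.1 hconj
  -- r ^ N = q
  have htEN : tE ^ N = algebraMap ℚ E q := by
    apply Subtype.ext
    push_cast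
    simpa using htNC
  have hrN : r ^ N = ((q : ℚ) : ℂ) := by
    have := congrArg ψ htEN
    rw [map_pow, hψt] at this
    rw [this, IsScalarTower.algebraMap_apply ℚ K E, ψ.commutes]
    exact φ0.commutes q
  have hsN : s ^ N = (q : ℝ) := by
    have : ((s : ℂ)) ^ N = ((q : ℝ) : ℂ) := by rw [← hs, hrN]; norm_num
    exact_mod_cast this
  have habs : |s| = |t| := by
    have h1 : |s| ^ N = |t| ^ N := by
      rw [← abs_pow, ← abs_pow, hsN, htN]
    exact (pow_left_strictMonoOn₀ hN).injOn (abs_nonneg s) (abs_nonneg t) h1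
  rcases abs_eq_abs.1 habs with h | h
  · left; rw [hs, h]
  · right; rw [hs, h]; push_cast; ring

theorem no_tan_pow_rational (N : ℕ) (hN : 3 ≤ N) :
    ¬ ∃ θ : ℚ, Real.cos (Real.pi * θ) ≠ 0 ∧
      (∀ k : ℕ, 1 ≤ k → k ≤ N - 1 → Irrational (Real.tan (Real.pi * θ) ^ k)) ∧
      (∃ q : ℚ, Real.tan (Real.pi * θ) ^ N = q) := by
  rintro ⟨θ, hcos, hirr, q, hq⟩
  set φr : ℝ := Real.pi * θ with hφr
  set t : ℝ := Real.tan φr with htdef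
  have hirr1 : Irrational t := by simpa using hirr 1 le_rfl (by omega)
  have hirr2 : Irrational (t ^ 2) := hirr 2 (by omega) (by omega)
  have ht0 : t ≠ 0 := by
    intro h
    exact hirr1 (h ▸ ⟨0, by norm_num⟩)
  -- the root of unity z = e^{2 i φr}
  set c : ℝ := Real.cos (2 * φr) with hc
  set sn : ℝ := Real.sin (2 * φr) with hsn
  set z : ℂ := Complex.exp ((2 * φr : ℝ) * Complex.I) with hzdef
  have hzeq : z = (c : ℂ) + (sn : ℂ) * Complex.I := by
    rw [hzdef, Complex.exp_mul_I, hc, hsn, Complex.ofReal_cos, Complex.ofReal_sin]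
  have h1 : c - 1 = -t * sn := by
    rw [hc, hsn, htdef, Real.tan_eq_sin_div_cos, Real.sin_two_mul, Real.cos_two_mul]
    field_simp
    linear_combination 2 * (Real.sin_sq_add_cos_sq φr)
  have h2 : sn = t * (c + 1) := by
    rw [hc, hsn, htdef, Real.tan_eq_sin_div_cos, Real.sin_two_mul, Real.cos_two_mul]
    field_simp
    ring
  have hrel : z - 1 = Complex.I * (t : ℂ) * (z + 1) := by
    rw [hzeq, Complex.ext_iff]
    constructor
    · simp
      linarith [h1]
    · simp
      linarith [h2]
  have hden : (θ.den : ℕ) ≠ 0 := θ.pos.ne'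
  have hz : z ^ θ.den = 1 := by
    rw [hzdef, ← Complex.exp_nat_mul]
    have hnd : ((θ : ℝ)) * (θ.den : ℝ) = (θ.num : ℝ) := by
      exact_mod_cast congrArg (fun x : ℚ => (x : ℝ)) (Rat.mul_den_eq_num θ)
    have harg : (θ.den : ℂ) * ((2 * φr : ℝ) * Complex.I) = (θ.num : ℂ) * (2 * (Real.pi : ℂ) * Complex.I) := by
      push_cast [hφr]
      have : ((θ : ℂ)) * (θ.den : ℂ) = (θ.num : ℂ) := by exact_mod_cast congrArg (fun x : ℝ => (x : ℂ)) hnd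
      linear_combination (2 * (Real.pi : ℂ) * Complex.I) * this
    rw [harg]
    exact_mod_cast Complex.exp_int_mul_two_pi_mul_I θ.num
  -- minpoly analysis
  have htNC : ((t : ℂ)) ^ N = ((q : ℚ) : ℂ) := by
    have := congrArg (fun x : ℝ => (x : ℂ)) hq
    push_cast at this
    exact_mod_cast this
  have hN0 : N ≠ 0 := by omega
  have ht : IsIntegral ℚ ((t : ℂ)) := by
    refine ⟨Polynomial.X ^ N - Polynomial.C q, Polynomial.monic_X_pow_sub_C q hN0, ?_⟩
    simp [htNC]
  set p : Polynomial ℚ := minpoly ℚ ((t : ℂ)) with hp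
  set pm : Polynomial ℂ := p.map (algebraMap ℚ ℂ) with hpm
  have hpne : p ≠ 0 := minpoly.ne_zero ht
  have hpmne : pm ≠ 0 := Polynomial.map_ne_zero hpne
  have hnodup : pm.roots.Nodup :=
    Polynomial.nodup_roots ((minpoly.irreducible ht).separable.map)
  have hsplit : Polynomial.Splits pm :=
    IsAlgClosed.splits pm
  have hcard : pm.roots.card = p.natDegree := by
    rw [(Polynomial.splits_iff_card_roots).1 hsplit, Polynomial.natDegree_map]
  have hroots : ∀ r ∈ pm.roots, r = ((t : ℂ)) ∨ r = -((t : ℂ)) := by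
    intro r hr
    exact root_pm hden hN0 hz hrel hq ht0 hr
  have hcard2 : p.natDegree ≤ 2 := by
    rw [← hcard, ← Multiset.toFinset_card_of_nodup hnodup]
    have hsub : pm.roots.toFinset ⊆ ({((t : ℂ)), -((t : ℂ))} : Finset ℂ) := by
      intro x hx
      rcases hroots x (Multiset.mem_toFinset.1 hx) with h | h <;> simp [h]
    calc pm.roots.toFinset.card ≤ ({((t : ℂ)), -((t : ℂ))} : Finset ℂ).card :=
          Finset.card_le_card hsub
      _ ≤ 2 := Finset.card_insert_le _ _ |>.trans (by simp)
  have hdegpos : 0 < p.natDegree := minpoly.natDegree_pos ht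
  have hdeg : p.natDegree = 1 ∨ p.natDegree = 2 := by omega
  rcases hdeg with hdeg | hdeg
  · -- degree 1 : t rational
    have : ((t : ℂ)) ∈ (algebraMap ℚ ℂ).range := by
      rw [← minpoly.degree_eq_one_iff]
      rw [Polynomial.degree_eq_natDegree hpne, hdeg]
      rfl
    obtain ⟨c, hc⟩ := this
    apply hirr1
    refine ⟨c, ?_⟩
    have : (((c : ℝ)) : ℂ) = ((t : ℝ) : ℂ) := by
      rw [← hc]; push_cast; norm_num
    exact_mod_cast this
  · -- degree 2
    have hmaps : ∀ x : ℂ, Polynomial.aeval x p = 0 → x ∈ pm.roots := by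
      intro x hx
      rw [Polynomial.mem_roots hpmne, Polynomial.IsRoot, Polynomial.eval_map,
        ← Polynomial.aeval_def]
      exact hx
    have htmem : ((t : ℂ)) ∈ pm.roots := hmaps _ (minpoly.aeval ℚ _)
    -- find the other root
    have hcard' : Multiset.card (pm.roots.erase ((t : ℂ))) = 1 := by
      rw [Multiset.card_erase_of_mem htmem, hcard, hdeg]
      rfl
    obtain ⟨r, hrmem⟩ := Multiset.card_pos_iff_exists_mem.1 (by rw [hcard']; norm_num)
    have hrmem' : r ∈ pm.roots := Multiset.mem_of_mem_erase hrmem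
    have hrne : r ≠ ((t : ℂ)) := by
      intro h
      subst h
      exact (Multiset.Nodup.notMem_erase hnodup) hrmem
    have hrneg : r = -((t : ℂ)) := (hroots r hrmem').resolve_left hrne
    have haevneg : Polynomial.aeval (-((t : ℂ))) p = 0 := by
      have : pm.IsRoot r := (Polynomial.mem_roots hpmne).1 hrmem'
      rw [hrneg] at this
      rwa [Polynomial.IsRoot, Polynomial.eval_map, ← Polynomial.aeval_def] at this
    have haevpos : Polynomial.aeval ((t : ℂ)) p = 0 := minpoly.aeval ℚ _
    -- expand the two evaluations
    have hmon : p.coeff 2 = 1 := by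
      have := (minpoly.monic ht).coeff_natDegree
      rwa [hdeg] at this
    have hexp : ∀ x : ℂ, Polynomial.aeval x p =
        ((p.coeff 0 : ℚ) : ℂ) + ((p.coeff 1 : ℚ) : ℂ) * x + x ^ 2 := by
      intro x
      rw [Polynomial.aeval_eq_sum_range, hdeg]
      rw [Finset.sum_range_succ, Finset.sum_range_succ, Finset.sum_range_one]
      simp [hmon, Rat.smul_def]
    rw [hexp] at haevpos haevneg
    have hb : ((p.coeff 1 : ℚ) : ℂ) * ((t : ℂ)) = 0 := by
      linear_combination (haevpos - haevneg) / 2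
    have htc0 : ((t : ℂ)) ≠ 0 := by exact_mod_cast ht0
    have hb0 : ((p.coeff 1 : ℚ) : ℂ) = 0 := by
      rcases mul_eq_zero.1 hb with h | h
      · exact h
      · exact absurd h htc0
    have hsq : ((t : ℂ)) ^ 2 = ((-p.coeff 0 : ℚ) : ℂ) := by
      push_cast
      linear_combination haevpos - ((t : ℂ)) * hb0
    apply hirr2
    refine ⟨-p.coeff 0, ?_⟩
    have h' : (((-p.coeff 0 : ℚ) : ℝ) : ℂ) = (((t : ℝ)) : ℂ) ^ 2 := by
      push_cast
      push_cast at hsq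
      linear_combination hsq.symm
    exact_mod_cast h'
end

section
/- If n is an odd positive integer, θ is a rational number, and cos(πθ)^n is rational, then cos(πθ) ∈ {0, 1/2, -1/2, 1, -1}. -/
open Complex IntermediateField

private lemma aux_half_int (y : ℝ) (z : ℤ) (h1 : -2 ≤ z) (h2 : z ≤ 2)
    (h : (z : ℝ) = 2 * y) : y ∈ ({0, 1/2, -1/2, 1, -1} : Set ℝ) := by
  simp only [Set.mem_insert_iff, Set.mem_singleton_iff]
  have hcase : z = -2 ∨ z = -1 ∨ z = 0 ∨ z = 1 ∨ z = 2 := by omega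
  rcases hcase with rfl | rfl | rfl | rfl | rfl <;> push_cast at h
  · exact Or.inr (Or.inr (Or.inr (Or.inr (by linarith))))
  · exact Or.inr (Or.inr (Or.inl (by linarith)))
  · exact Or.inl (by linarith)
  · exact Or.inr (Or.inl (by linarith))
  · exact Or.inr (Or.inr (Or.inr (Or.inl (by linarith))))

theorem rational_cos_odd_pow_values (n : ℕ) (hn : 0 < n) (hodd : Odd n) (θ : ℚ)
    (h : ∃ q : ℚ, Real.cos (Real.pi * θ) ^ n = q) :
    Real.cos (Real.pi * θ) ∈ ({0, 1/2, -1/2, 1, -1} : Set ℝ) := by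
  obtain ⟨q, hq⟩ := h
  set x : ℝ := Real.cos (Real.pi * θ) with hx
  set ζ : ℂ := Complex.exp ((Real.pi * θ : ℝ) * Complex.I) with hζdef
  have hζ0 : ζ ≠ 0 := Complex.exp_ne_zero _
  have hcos : (ζ + ζ⁻¹ : ℂ) = 2 * (x : ℂ) := by
    rw [hζdef, ← Complex.exp_neg]
    have : (x : ℂ) = Complex.cos ((Real.pi * θ : ℝ) : ℂ) := by
      rw [hx]; push_cast [Complex.ofReal_cos]; ring_nf
    rw [this, Complex.cos]
    ring
  have hpow : ζ ^ (2 * θ.den) = 1 := by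
    rw [hζdef, ← Complex.exp_nat_mul]
    have harg : (2 * θ.den : ℂ) * ((Real.pi * θ : ℝ) * Complex.I)
        = (θ.num : ℤ) * (2 * Real.pi * Complex.I) := by
      have hden : (θ : ℂ) * (θ.den : ℂ) = (θ.num : ℂ) := by
        exact_mod_cast congrArg (Rat.cast : ℚ → ℂ) (Rat.mul_den_eq_num θ)
      push_cast
      linear_combination (2 * Real.pi * Complex.I) * hden
    push_cast at harg ⊢
    rw [harg, Complex.exp_int_mul_two_pi_mul_I θ.num]
  have hfin : IsOfFinOrder ζ :=
    isOfFinOrder_iff_pow_eq_one.mpr ⟨2 * θ.den, by positivity, hpow⟩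
  have hd : 0 < orderOf ζ := hfin.orderOf_pos
  have hprim : IsPrimitiveRoot ζ (orderOf ζ) := IsPrimitiveRoot.orderOf ζ
  set K := IntermediateField.adjoin ℚ ({ζ} : Set ℂ) with hK
  have hprim' : IsPrimitiveRoot ζ ((⟨orderOf ζ, hd⟩ : ℕ+) : ℕ) := hprim
  have hζint : IsIntegral ℚ ζ := by
    refine ⟨Polynomial.X ^ (2 * θ.den) - 1, ?_, ?_⟩
    · simpa using Polynomial.monic_X_pow_sub_C (1 : ℚ) (by positivity)
    · simp [hpow]
  haveI : NeZero (orderOf ζ) := ⟨hd.ne'⟩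
  haveI : IsCyclotomicExtension {orderOf ζ} ℚ K := by
    have H := IntermediateField.adjoin_simple_toSubalgebra_of_isAlgebraic hζint.isAlgebraic
    refine IsCyclotomicExtension.equiv _ _ _ (h := ?_) (.refl : K.toSubalgebra ≃ₐ[ℚ] _)
    rw [hK, H]
    exact hprim.adjoin_isCyclotomicExtension ℚ
  haveI : FiniteDimensional ℚ K :=
    IsCyclotomicExtension.finiteDimensional {orderOf ζ} ℚ K
  haveI : IsGalois ℚ K := IsCyclotomicExtension.isGalois {orderOf ζ} ℚ K
  set zK : K := ⟨ζ, IntermediateField.subset_adjoin ℚ _ rfl⟩ with hzK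
  set cK : K := zK + zK⁻¹ with hcK
  have hcKC : (cK : ℂ) = 2 * (x : ℂ) := by
    rw [hcK]; push_cast; rw [hzK]; exact hcos
  have hckn : cK ^ n = algebraMap ℚ K ((2 : ℚ) ^ n * q) := by
    refine Subtype.ext ?_
    show ((cK ^ n : K) : ℂ) = ((algebraMap ℚ K ((2 : ℚ) ^ n * q) : K) : ℂ)
    have h1 : ((cK ^ n : K) : ℂ) = (2 * (x : ℂ)) ^ n := by push_cast [hcKC]; ring
    have h2 : ((algebraMap ℚ K ((2 : ℚ) ^ n * q) : K) : ℂ) = (((2 : ℚ) ^ n * q : ℚ) : ℂ) := by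
      have h2' := (IsScalarTower.algebraMap_apply ℚ K ℂ ((2 : ℚ) ^ n * q)).symm
      rw [show (algebraMap K ℂ) (algebraMap ℚ K ((2 : ℚ) ^ n * q))
        = ((algebraMap ℚ K ((2 : ℚ) ^ n * q) : K) : ℂ) from rfl] at h2'
      rw [h2', eq_ratCast]
    rw [h1, h2]
    have h3 : (x : ℂ) ^ n = (q : ℂ) := by exact_mod_cast congrArg Complex.ofReal hq
    push_cast
    rw [mul_pow, h3]
  have hzKd : zK ^ orderOf ζ = 1 := by
    apply Subtype.coe_injective
    push_cast [hzK]
    exact pow_orderOf_eq_one ζ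
  have hfix : ∀ σ : K ≃ₐ[ℚ] K, σ cK = cK := by
    intro σ
    set w : K := σ zK with hw
    have hwd : (w : ℂ) ^ orderOf ζ = 1 := by
      have h0 : w ^ orderOf ζ = 1 := by rw [hw, ← map_pow, hzKd, map_one]
      exact_mod_cast congrArg Subtype.val h0
    have habs : ‖(w : ℂ)‖ = 1 := by
      exact Complex.norm_eq_one_of_pow_eq_one hwd hd.ne'
    have hwinv : ((w : ℂ))⁻¹ = starRingEnd ℂ (w : ℂ) := Complex.inv_eq_conj habs
    have hσc : ((σ cK : K) : ℂ) = ((2 * ((w : ℂ)).re : ℝ) : ℂ) := by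
      have h0 : σ cK = w + w⁻¹ := by rw [hcK, map_add, map_inv₀, hw]
      rw [h0]
      push_cast
      rw [hwinv, Complex.add_conj]
      push_cast; ring
    have hσpow : (σ cK) ^ n = cK ^ n := by
      rw [← map_pow, hckn, AlgEquiv.commutes]
    have hreal : (2 * ((w : ℂ)).re : ℝ) ^ n = (2 * x) ^ n := by
      have hC : (((2 * ((w : ℂ)).re : ℝ) : ℂ)) ^ n = (((2 * x : ℝ) : ℂ)) ^ n := by
        rw [← hσc]
        have h1 : ((σ cK ^ n : K) : ℂ) = ((cK ^ n : K) : ℂ) := by rw [hσpow]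
        push_cast at h1
        rw [h1, hcKC]
        push_cast; ring
      exact_mod_cast hC
    have heq := hodd.strictMono_pow (R := ℝ) |>.injective hreal
    refine Subtype.ext ?_
    show ((σ cK : K) : ℂ) = ((cK : K) : ℂ)
    rw [hσc, hcKC, heq]; push_cast; ring
  haveI hGal : IsGalois ℚ K := inferInstance
  have hbot : cK ∈ (⊥ : IntermediateField ℚ K) := by
    have h2 := ((IsGalois.tfae (F := ℚ) (E := K)).out 0 1).mp hGal
    rw [← h2]
    rintro ⟨σ, -⟩
    exact hfix σ
  obtain ⟨r, hr⟩ := IntermediateField.mem_bot.mp hbot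
  have hrR : (r : ℝ) = 2 * x := by
    have h0 : ((r : ℝ) : ℂ) = 2 * (x : ℂ) := by
      have h2 : ((algebraMap ℚ K r : K) : ℂ) = (r : ℂ) := by
        have h2' := (IsScalarTower.algebraMap_apply ℚ K ℂ r).symm
        rw [show (algebraMap K ℂ) (algebraMap ℚ K r)
          = ((algebraMap ℚ K r : K) : ℂ) from rfl] at h2'
        rw [h2', eq_ratCast]
      rw [← hcKC, ← hr, h2]
      push_cast; ring
    have := h0
    push_cast at this
    exact_mod_cast this
  have hζZint : IsIntegral ℤ ζ := by
    refine ⟨Polynomial.X ^ (2 * θ.den) - 1, ?_, ?_⟩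
    · simpa using Polynomial.monic_X_pow_sub_C (1 : ℤ) (by positivity)
    · simp [hpow]
  have hζinvZ : IsIntegral ℤ (ζ⁻¹) := by
    have h1 : ζ⁻¹ = ζ ^ (2 * θ.den - 1) := by
      refine inv_eq_of_mul_eq_one_right ?_
      rw [← pow_succ']
      have h2 : 2 * θ.den - 1 + 1 = 2 * θ.den := by have := θ.pos; omega
      rw [h2, hpow]
    rw [h1]
    exact hζZint.pow _
  have hcint : IsIntegral ℤ ((r : ℚ)) := by
    apply IsIntegral.tower_bot_of_field (B := ℂ)
    have h0 : (algebraMap ℚ ℂ) r = ζ + ζ⁻¹ := by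
      rw [hcos, eq_ratCast]
      have := congrArg Complex.ofReal hrR
      push_cast at this
      rw [this]
    rw [h0]
    exact hζZint.add hζinvZ
  obtain ⟨z, hz⟩ := IsIntegrallyClosed.isIntegral_iff.mp hcint
  have hz' : (z : ℚ) = r := by exact_mod_cast hz
  have hzR : (z : ℝ) = 2 * x := by
    rw [← hrR]; exact_mod_cast hz'
  have hxb : |x| ≤ 1 := Real.abs_cos_le_one _
  rw [abs_le] at hxb
  have hlb : -2 ≤ z := by exact_mod_cast (by linarith : (-2 : ℝ) ≤ (z : ℝ))
  have hub : z ≤ 2 := by exact_mod_cast (by linarith : ((z : ℝ) : ℝ) ≤ 2)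
  exact aux_half_int x z hlb hub hzR
end

section
/- If n is an even positive integer, θ is a rational number, and cos(πθ)^n is rational, then cos(πθ) ∈ {0, 1/2, -1/2, 1/√2, -1/√2, √3/2, -√3/2, 1, -1}. -/
lemma abs_eq_of_pow_eq {x y : ℝ} {n : ℕ} (hn : 0 < n) (he : Even n) (h : x ^ n = y ^ n) :
    |x| = |y| := by
  have h1 : |x| ^ n = |y| ^ n := by rw [he.pow_abs, he.pow_abs, h]
  exact (pow_left_strictMonoOn₀ hn.ne').injOn (abs_nonneg x) (abs_nonneg y) h1


open Real in
lemma cos_abs_eq_imp {N x y : ℕ} (hx : 2*x < N) (hy : 2*y < N)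
    (h : |Real.cos (2*Real.pi*x/N)| = |Real.cos (2*Real.pi*y/N)|) :
    x = y ∨ 2*(x+y) = N := by
  have hNpos : (0:ℝ) < N := by
    have : 0 < N := by omega
    exact_mod_cast this
  have hxN : (2*x:ℝ) < N := by exact_mod_cast hx
  have hyN : (2*y:ℝ) < N := by exact_mod_cast hy
  have hα0 : (0:ℝ) ≤ 2*Real.pi*x/N := by positivity
  have hβ0 : (0:ℝ) ≤ 2*Real.pi*y/N := by positivity
  have hα1 : 2*Real.pi*x/N ≤ Real.pi := by
    rw [div_le_iff₀ hNpos]; nlinarith [Real.pi_pos]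
  have hβ1 : 2*Real.pi*y/N ≤ Real.pi := by
    rw [div_le_iff₀ hNpos]; nlinarith [Real.pi_pos]
  rcases abs_eq_abs.mp h with h' | h'
  · left
    have := Real.injOn_cos ⟨hα0, hα1⟩ ⟨hβ0, hβ1⟩ h'
    field_simp at this
    exact_mod_cast this
  · right
    have h'' : Real.cos (2*Real.pi*x/N) = Real.cos (Real.pi - 2*Real.pi*y/N) := by
      rw [Real.cos_pi_sub]; linarith [h']
    have hγ0 : (0:ℝ) ≤ Real.pi - 2*Real.pi*y/N := by linarith
    have hγ1 : Real.pi - 2*Real.pi*y/N ≤ Real.pi := by linarith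
    have heq := Real.injOn_cos ⟨hα0, hα1⟩ ⟨hγ0, hγ1⟩ h''
    have : (2*(x+y):ℝ) = N := by
      field_simp at heq
      push_cast
      nlinarith [Real.pi_pos]
    exact_mod_cast this


lemma coprime_compl {N j : ℕ} (hjle : j ≤ N) (hcop : N.Coprime j) : N.Coprime (N - j) := by
  have c1 : Nat.Coprime (N - j) j := (Nat.coprime_sub_self_left hjle).mpr hcop
  have c2 : Nat.Coprime (N - j) (j + (N - j)) := Nat.coprime_add_self_right.mpr c1
  have : j + (N - j) = N := by omega
  rw [this] at c2
  exact c2.symm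

lemma card_lower_units {N : ℕ} (hN : 2 < N) :
    2 * ((Finset.range N).filter (fun j => N.Coprime j ∧ 2*j < N)).card = Nat.totient N := by
  classical
  set T := (Finset.range N).filter N.Coprime with hT
  have htot : Nat.totient N = T.card := Nat.totient_eq_card_coprime N
  set S := T.filter (fun j => 2*j < N) with hS
  have hSeq : (Finset.range N).filter (fun j => N.Coprime j ∧ 2*j < N) = S := by
    rw [hS, hT, Finset.filter_filter]
  set S' := T.filter (fun j => ¬ 2*j < N) with hS'
  have hsplit : S.card + S'.card = T.card := Finset.card_filter_add_card_filter_not _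
  have hmem : ∀ j ∈ T, 0 < j ∧ j < N ∧ N.Coprime j ∧ 2*j ≠ N := by
    intro j hj
    rw [hT, Finset.mem_filter, Finset.mem_range] at hj
    obtain ⟨hjN, hcop⟩ := hj
    have hj0 : j ≠ 0 := by
      rintro rfl
      rw [Nat.coprime_zero_right] at hcop; omega
    refine ⟨by omega, hjN, hcop, ?_⟩
    intro h2j
    have hjd : j ∣ N := ⟨2, by omega⟩
    have := (hcop.symm).eq_one_of_dvd hjd
    omega
  have hcard : S'.card = S.card := by
    apply Finset.card_bij (fun a _ => N - a)
    · intro a ha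
      rw [hS', Finset.mem_filter] at ha
      obtain ⟨haT, ha2⟩ := ha
      obtain ⟨h0, hlt, hcop, hne⟩ := hmem a haT
      rw [hS, Finset.mem_filter, hT, Finset.mem_filter, Finset.mem_range]
      exact ⟨⟨by omega, coprime_compl (by omega) hcop⟩, by omega⟩
    · intro a ha b hb hab
      obtain ⟨_, hlta, _, _⟩ := hmem a (Finset.mem_filter.mp ha).1
      obtain ⟨_, hltb, _, _⟩ := hmem b (Finset.mem_filter.mp hb).1
      omega
    · intro b hb
      rw [hS, Finset.mem_filter] at hb
      obtain ⟨hbT, hb2⟩ := hb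
      obtain ⟨h0, hlt, hcop, hne⟩ := hmem b hbT
      refine ⟨N - b, ?_, by omega⟩
      rw [hS', Finset.mem_filter, hT, Finset.mem_filter, Finset.mem_range]
      exact ⟨⟨by omega, coprime_compl (by omega) hcop⟩, by omega⟩
  rw [hSeq]
  omega


set_option maxRecDepth 40000 in
lemma totient_small {N : ℕ} (h0 : 0 < N) (h : Nat.totient N ≤ 5) : N ≤ 12 := by
  have hphi : 0 < Nat.totient N := Nat.totient_pos.mpr h0
  have hfac : ∀ p k : ℕ, p ^ k ∣ N → Nat.totient (p ^ k) ≤ 5 := by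
    intro p k hpk
    exact le_trans (Nat.le_of_dvd hphi (Nat.totient_dvd_of_dvd hpk)) h
  have step : ∀ p k : ℕ, Nat.Prime p → 5 < Nat.totient (p^(k+1)) → N.factorization p ≤ k := by
    intro p k hp htot
    by_contra hcon
    have hdvd : p^(k+1) ∣ N :=
      (Nat.Prime.pow_dvd_iff_le_factorization hp h0.ne').mpr (by omega)
    have := hfac p (k+1) hdvd
    omega
  have hdvd : N ∣ 120 := by
    rw [← Nat.factorization_le_iff_dvd h0.ne' (by norm_num)]
    intro p
    by_cases hp : p.Prime
    · by_cases hp7 : 7 ≤ p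
      · have hnd : ¬ p ∣ N := by
          intro hdvd
          have := hfac p 1 (by simpa using hdvd)
          rw [pow_one, Nat.totient_prime hp] at this
          omega
        simp [Nat.factorization_eq_zero_of_not_dvd hnd]
      · have hple : p ≤ 6 := by omega
        have hb : ∀ k : ℕ, p ^ k ∣ 120 → k ≤ (120:ℕ).factorization p := by
          intro k hk
          exact (Nat.Prime.pow_dvd_iff_le_factorization hp (by norm_num)).mp hk
        interval_cases p
        · exact absurd hp (by norm_num)
        · exact absurd hp (by norm_num)
        · have := step 2 3 hp (by decide)
          have := hb 3 (by norm_num)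
          omega
        · have := step 3 1 hp (by decide)
          have := hb 1 (by norm_num)
          omega
        · exact absurd hp (by norm_num)
        · have := step 5 1 hp (by decide)
          have := hb 1 (by norm_num)
          omega
        · exact absurd hp (by norm_num)
    · simp [Nat.factorization_eq_zero_of_not_prime _ hp]
  have hle : N ≤ 120 := Nat.le_of_dvd (by norm_num) hdvd
  by_contra hcon
  have hlist : ∀ n ∈ Finset.Icc 13 120, 5 < Nat.totient n := by decide
  have := hlist N (Finset.mem_Icc.mpr ⟨by omega, hle⟩)
  omega

lemma key_nt {N : ℕ} (hN : 2 < N)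
    (H : ∀ x y : ℕ, 0 < x → 2*x < N → 0 < y → 2*y < N → N.Coprime x → N.Coprime y →
      x = y ∨ 2*(x+y) = N) :
    N = 3 ∨ N = 4 ∨ N = 6 ∨ N = 8 ∨ N = 12 := by
  by_cases h5 : Nat.totient N ≤ 5
  · have h12 := totient_small (by omega) h5
    interval_cases N
    · tauto
    · tauto
    · -- N = 5
      rcases H 1 2 (by norm_num) (by norm_num) (by norm_num) (by norm_num)
        (by norm_num) (by norm_num) with h | h <;> omega
    · tauto
    · exact absurd h5 (by decide)  -- N = 7
    · tauto
    · exact absurd h5 (by decide)  -- N = 9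
    · -- N = 10
      rcases H 1 3 (by norm_num) (by norm_num) (by norm_num) (by norm_num)
        (by norm_num) (by norm_num) with h | h <;> omega
    · exact absurd h5 (by decide)  -- N = 11
    · tauto
  · have hcount := card_lower_units hN
    have hcard : 2 < ((Finset.range N).filter (fun j => N.Coprime j ∧ 2*j < N)).card := by omega
    obtain ⟨a, ha, b, hb, c, hc, hab, hac, hbc⟩ := Finset.two_lt_card.mp hcard
    rw [Finset.mem_filter, Finset.mem_range] at ha hb hc
    have hpos : ∀ j, N.Coprime j ∧ 2*j < N → 0 < j := by
      rintro j ⟨hcop, _⟩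
      rcases Nat.eq_zero_or_pos j with rfl | h
      · rw [Nat.coprime_zero_right] at hcop; omega
      · exact h
    have h1 := H a b (hpos a ha.2) ha.2.2 (hpos b hb.2) hb.2.2 ha.2.1 hb.2.1
    have h2 := H a c (hpos a ha.2) ha.2.2 (hpos c hc.2) hc.2.2 ha.2.1 hc.2.1
    omega

open Polynomial in
lemma aux_const {N p n : ℕ} (hN : N ≠ 0) (hp : Nat.Coprime p N) (hn : 0 < n)
    {q : ℚ} (hq : (Real.cos (2*Real.pi*(p:ℝ)/N))^n = (q:ℝ))
    {j : ℕ} (hj : Nat.Coprime j N) :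
    (Real.cos (2*Real.pi*(j:ℝ)/N))^n = (q:ℝ) := by
  have hw : ∀ k : ℕ, Complex.exp (2*Real.pi*Complex.I*((k:ℂ)/N)) +
      (Complex.exp (2*Real.pi*Complex.I*((k:ℂ)/N)))⁻¹
      = 2 * ((Real.cos (2*Real.pi*(k:ℝ)/N) : ℝ) : ℂ) := by
    intro k
    have h1 : (2*(Real.pi:ℂ)*Complex.I*((k:ℂ)/N)) = ((2*Real.pi*(k:ℝ)/N : ℝ) : ℂ) * Complex.I := by
      push_cast; ring
    rw [h1, ← Complex.exp_neg]
    have h2 : -(((2*Real.pi*(k:ℝ)/N : ℝ) : ℂ) * Complex.I)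
        = ((-(2*Real.pi*(k:ℝ)/N) : ℝ) : ℂ) * Complex.I := by push_cast; ring
    rw [h2, Complex.exp_mul_I, Complex.exp_mul_I, Complex.ofReal_neg, Complex.cos_neg,
      Complex.sin_neg, Complex.ofReal_cos]
    ring
  set ζ := Complex.exp (2*Real.pi*Complex.I*((p:ℂ)/N)) with hζdef
  have hζ : IsPrimitiveRoot ζ N := Complex.isPrimitiveRoot_exp_of_coprime p N hN hp
  have hζ0 : ζ ≠ 0 := Complex.exp_ne_zero _
  set P : ℚ[X] := (X^2+1)^n - C ((2:ℚ)^n * q) * X^n with hP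
  have haevalP : ∀ z : ℂ, z ≠ 0 → (z + z⁻¹)^n = 2^n * (q:ℂ) → aeval z P = 0 := by
    intro z hz0 hzq
    have hz2 : z^2 + 1 = z * (z + z⁻¹) := by field_simp
    rw [hP]
    simp only [map_sub, map_pow, map_add, map_one, map_mul, aeval_X, aeval_C, eq_ratCast]
    rw [hz2, mul_pow, hzq]
    push_cast
    ring
  have haevalP' : ∀ z : ℂ, z ≠ 0 → aeval z P = 0 → (z + z⁻¹)^n = 2^n * (q:ℂ) := by
    intro z hz0 hzq
    have hz2 : z^2 + 1 = z * (z + z⁻¹) := by field_simp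
    rw [hP] at hzq
    simp only [map_sub, map_pow, map_add, map_one, map_mul, aeval_X, aeval_C, eq_ratCast] at hzq
    rw [hz2, mul_pow, sub_eq_zero] at hzq
    have hzn : (z:ℂ)^n ≠ 0 := pow_ne_zero _ hz0
    apply mul_left_cancel₀ hzn
    push_cast at hzq ⊢
    linear_combination hzq
  have hζq : (ζ + ζ⁻¹)^n = 2^n * (q:ℂ) := by
    rw [hw p, mul_pow]
    rw [← Complex.ofReal_pow, hq]
    push_cast
    ring
  have hdvd : minpoly ℚ ζ ∣ P := minpoly.dvd ℚ ζ (haevalP ζ hζ0 hζq)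
  have hcyc : cyclotomic N ℚ = minpoly ℚ ζ :=
    cyclotomic_eq_minpoly_rat hζ (Nat.pos_of_ne_zero hN)
  set w := Complex.exp (2*Real.pi*Complex.I*((j:ℂ)/N)) with hwdef
  have hwprim : IsPrimitiveRoot w N := Complex.isPrimitiveRoot_exp_of_coprime j N hN hj
  have hw0 : w ≠ 0 := Complex.exp_ne_zero _
  have hwc : aeval w (cyclotomic N ℚ) = 0 := by
    have hroot := hwprim.isRoot_cyclotomic (Nat.pos_of_ne_zero hN)
    rw [aeval_def, eval₂_eq_eval_map, map_cyclotomic]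
    exact hroot
  have hPw : aeval w P = 0 := by
    obtain ⟨g, hg⟩ := hdvd
    rw [← hcyc] at hg
    rw [hg, map_mul, hwc, zero_mul]
  have hwq : (w + w⁻¹)^n = 2^n * (q:ℂ) := haevalP' w hw0 hPw
  rw [hw j, mul_pow, ← Complex.ofReal_pow] at hwq
  have h2n : ((2:ℂ))^n ≠ 0 := pow_ne_zero _ two_ne_zero
  have := mul_left_cancel₀ h2n hwq
  exact_mod_cast this


lemma sqrt2_half : Real.sqrt 2 / 2 = 1 / Real.sqrt 2 := by
  have h2 : Real.sqrt 2 * Real.sqrt 2 = 2 := Real.mul_self_sqrt (by norm_num)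
  rw [div_eq_div_iff (by norm_num) (by positivity)]
  rw [h2]; norm_num

lemma final_values {N : ℕ} (hN : N ≠ 0) (c : ℝ)
    (habs : ∀ j : ℕ, Nat.Coprime j N → |Real.cos (2*Real.pi*(j:ℝ)/N)| = |c|) :
    c ∈ ({0, 1/2, -1/2, 1 / Real.sqrt 2, -(1 / Real.sqrt 2),
        Real.sqrt 3 / 2, -(Real.sqrt 3 / 2), 1, -1} : Set ℝ) := by
  simp only [Set.mem_insert_iff, Set.mem_singleton_iff]
  have h1 := habs 1 (Nat.coprime_one_left N)
  by_cases hN2 : 2 < N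
  · have H : ∀ x y : ℕ, 0 < x → 2*x < N → 0 < y → 2*y < N → N.Coprime x → N.Coprime y →
        x = y ∨ 2*(x+y) = N := by
      intro x y hx0 hx hy0 hy hcx hcy
      exact cos_abs_eq_imp hx hy (by rw [habs x hcx.symm, habs y hcy.symm])
    rcases key_nt hN2 H with rfl | rfl | rfl | rfl | rfl
    · -- N = 3
      have e : (2*Real.pi*((1:ℕ):ℝ)/((3:ℕ):ℝ)) = Real.pi - Real.pi/3 := by push_cast; ring
      rw [e, Real.cos_pi_sub, Real.cos_pi_div_three] at h1
      rw [abs_neg, abs_of_nonneg (by norm_num)] at h1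
      rcases (abs_eq (by norm_num : (0:ℝ) ≤ 1/2)).mp h1.symm with rfl | rfl <;> norm_num
    · -- N = 4
      have e : (2*Real.pi*((1:ℕ):ℝ)/((4:ℕ):ℝ)) = Real.pi/2 := by push_cast; ring
      rw [e, Real.cos_pi_div_two, abs_zero] at h1
      left; exact (abs_eq_zero.mp h1.symm)
    · -- N = 6
      have e : (2*Real.pi*((1:ℕ):ℝ)/((6:ℕ):ℝ)) = Real.pi/3 := by push_cast; ring
      rw [e, Real.cos_pi_div_three, abs_of_nonneg (by norm_num)] at h1
      rcases (abs_eq (by norm_num : (0:ℝ) ≤ 1/2)).mp h1.symm with rfl | rfl <;> norm_num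
    · -- N = 8
      have e : (2*Real.pi*((1:ℕ):ℝ)/((8:ℕ):ℝ)) = Real.pi/4 := by push_cast; ring
      rw [e, Real.cos_pi_div_four, abs_of_nonneg (by positivity)] at h1
      rcases (abs_eq (by positivity : (0:ℝ) ≤ Real.sqrt 2 / 2)).mp h1.symm with rfl | rfl
      · rw [sqrt2_half]; tauto
      · rw [sqrt2_half]; tauto
    · -- N = 12
      have e : (2*Real.pi*((1:ℕ):ℝ)/((12:ℕ):ℝ)) = Real.pi/6 := by push_cast; ring
      rw [e, Real.cos_pi_div_six, abs_of_nonneg (by positivity)] at h1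
      rcases (abs_eq (by positivity : (0:ℝ) ≤ Real.sqrt 3 / 2)).mp h1.symm with rfl | rfl <;> tauto
  · interval_cases N
    · exact absurd rfl hN
    · -- N = 1
      have e : (2*Real.pi*((1:ℕ):ℝ)/((1:ℕ):ℝ)) = 2*Real.pi := by push_cast; ring
      rw [e, Real.cos_two_pi, abs_one] at h1
      rcases (abs_eq (by norm_num : (0:ℝ) ≤ 1)).mp h1.symm with rfl | rfl <;> tauto
    · -- N = 2
      have e : (2*Real.pi*((1:ℕ):ℝ)/((2:ℕ):ℝ)) = Real.pi := by push_cast; ring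
      rw [e, Real.cos_pi, abs_neg, abs_one] at h1
      rcases (abs_eq (by norm_num : (0:ℝ) ≤ 1)).mp h1.symm with rfl | rfl <;> tauto

theorem rational_cos_even_pow_values (n : ℕ) (hn : 0 < n) (heven : Even n) (θ : ℚ)
    (h : ∃ q : ℚ, Real.cos (Real.pi * θ) ^ n = q) :
    Real.cos (Real.pi * θ) ∈
      ({0, 1/2, -1/2, 1 / Real.sqrt 2, -(1 / Real.sqrt 2),
        Real.sqrt 3 / 2, -(Real.sqrt 3 / 2), 1, -1} : Set ℝ) := by
  obtain ⟨q, hq⟩ := h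
  set k : ℤ := ⌊θ/2⌋ with hk
  set r : ℚ := θ/2 - k with hrdef
  have hr0 : 0 ≤ r := by
    have := Int.floor_le (θ/2)
    rw [hrdef, hk]; linarith
  have hr1 : r < 1 := by
    have := Int.lt_floor_add_one (θ/2)
    rw [hrdef, hk]; linarith
  set N := r.den with hNdef
  set p := r.num.toNat with hpdef
  have hN0 : N ≠ 0 := r.den_pos.ne'
  have hnum : r.num = (p:ℤ) := (Int.toNat_of_nonneg (Rat.num_nonneg.mpr hr0)).symm
  have hcop : Nat.Coprime p N := by
    have hred := r.reduced
    have habs : r.num.natAbs = p := by omega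
    rwa [habs] at hred
  have hcast : ((r:ℚ):ℝ) = (p:ℝ)/(N:ℝ) := by
    rw [Rat.cast_def, hnum]
    push_cast
    rfl
  have hrR : ((r:ℚ):ℝ) = (θ:ℝ)/2 - (k:ℝ) := by rw [hrdef]; push_cast; ring
  have hθ : Real.pi * (θ:ℝ) = 2*Real.pi*(p:ℝ)/N + (k:ℝ)*(2*Real.pi) := by
    have hθ2 : (θ:ℝ) = 2*(((r:ℚ):ℝ) + (k:ℝ)) := by rw [hrR]; ring
    rw [hθ2, hcast]; ring
  have hcos : Real.cos (Real.pi * θ) = Real.cos (2*Real.pi*(p:ℝ)/N) := by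
    rw [hθ, Real.cos_add_int_mul_two_pi]
  have hq' : (Real.cos (2*Real.pi*(p:ℝ)/N))^n = (q:ℝ) := by rw [← hcos]; exact hq
  have habs : ∀ j : ℕ, Nat.Coprime j N → |Real.cos (2*Real.pi*(j:ℝ)/N)| = |Real.cos (Real.pi * θ)| := by
    intro j hj
    have h1 := aux_const hN0 hcop hn hq' hj
    have h2 : (Real.cos (2*Real.pi*(j:ℝ)/N))^n = (Real.cos (Real.pi * θ))^n := by rw [h1, hq]
    exact abs_eq_of_pow_eq hn heven h2
  exact final_values hN0 _ habs
end

section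
/- If n is an odd positive integer, θ is a rational number, and sin(πθ)^n is rational, then sin(πθ) ∈ {0, 1/2, -1/2, 1, -1}. -/
open Polynomial

/-- Key algebraic lemma: if `ξ` is a root of unity and `(ξ + ξ⁻¹)^n` is rational
with `n` odd, then `ξ + ξ⁻¹` is a (rational) integer. -/
lemma key_root_unity (N n : ℕ) (hN : 0 < N) (hodd : Odd n) (ξ : ℂ) (hξ : ξ ^ N = 1)
    (q : ℚ) (hq : (ξ + ξ⁻¹) ^ n = (q : ℂ)) : ∃ m : ℤ, ξ + ξ⁻¹ = (m : ℂ) := by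
  have hξ0 : ξ ≠ 0 := by
    intro h; rw [h, zero_pow hN.ne'] at hξ; exact zero_ne_one hξ
  set B : ℂ := ξ + ξ⁻¹ with hBdef
  -- ξ is integral
  have hξint : ∀ R : Type, ∀ _ : CommRing R, ∀ _ : Algebra R ℂ, IsIntegral R ξ := by
    intro R _ _
    refine ⟨X ^ N - 1, ?_, ?_⟩
    · simpa using monic_X_pow_sub_C (1 : R) hN.ne'
    · simp [hξ]
  have hinv : ξ⁻¹ = ξ ^ (N - 1) := by
    apply inv_eq_of_mul_eq_one_right
    have hN1 : N - 1 + 1 = N := by omega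
    rw [← pow_succ', hN1, hξ]
  have hBint : ∀ R : Type, ∀ _ : CommRing R, ∀ _ : Algebra R ℂ, IsIntegral R B := by
    intro R _ _
    rw [hBdef, hinv]
    exact (hξint R _ _).add ((hξint R _ _).pow _)
  have hBiQ : IsIntegral ℚ B := hBint ℚ _ _
  have hBiZ : IsIntegral ℤ B := hBint ℤ _ _
  set p : ℚ[X] := minpoly ℚ B with hp
  -- B is real
  have habsξ : ‖ξ‖ = 1 := by
    exact Complex.norm_eq_one_of_pow_eq_one hξ hN.ne'
  have hBreal : B = ((2 * ξ.re : ℝ) : ℂ) := by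
    rw [hBdef, Complex.inv_eq_conj habsξ, Complex.add_conj]
  -- divisibility facts
  have hd1 : p ∣ (dickson 1 1 N - C (2 : ℚ)) := by
    apply minpoly.dvd
    rw [map_sub, aeval_C, aeval_def, ← eval_map, map_dickson]
    simp only [map_one]
    have := dickson_one_one_eval_add_inv ξ ξ⁻¹ (mul_inv_cancel₀ hξ0) N
    rw [hBdef, this, hξ, inv_pow, hξ, inv_one]
    norm_num
  have hd2 : p ∣ (X ^ n - C q) := by
    apply minpoly.dvd
    rw [map_sub, aeval_C, map_pow, aeval_X, hq]
    simp
  -- every root of p (in ℂ) equals B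
  have hroots : ∀ z : ℂ, (p.map (algebraMap ℚ ℂ)).IsRoot z → z = B := by
    intro z hz
    have hev : ∀ f : ℚ[X], p ∣ f → (f.map (algebraMap ℚ ℂ)).eval z = 0 := by
      intro f ⟨g, hg⟩
      rw [hg, Polynomial.map_mul, eval_mul, hz.eq_zero, zero_mul]
    -- from hd1 : z = w + w⁻¹ with w^N = 1, so z is real
    have h1 := hev _ hd1
    rw [Polynomial.map_sub, Polynomial.map_C, eval_sub, eval_C, map_dickson, sub_eq_zero,
      map_one] at h1
    obtain ⟨u, hu⟩ := Complex.exists_root (f := X ^ 2 - C (z ^ 2 - 4)) (by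
      rw [degree_X_pow_sub_C (by norm_num)]; norm_num)
    have hu2 : u ^ 2 = z ^ 2 - 4 := by
      have := hu
      simp only [IsRoot, eval_sub, eval_pow, eval_X, eval_C, sub_eq_zero] at this
      exact this
    set w : ℂ := (z + u) / 2 with hw
    have hw0 : w * (z - w) = 1 := by
      rw [hw]; linear_combination (-(1:ℂ)/4) * hu2
    have hwne : w ≠ 0 := by
      intro h; rw [h, zero_mul] at hw0; exact zero_ne_one hw0
    have hwinv : w⁻¹ = z - w := inv_eq_of_mul_eq_one_right hw0
    have hwz : w + w⁻¹ = z := by rw [hwinv]; ring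
    have h2 := dickson_one_one_eval_add_inv w w⁻¹ (mul_inv_cancel₀ hwne) N
    rw [hwz, h1] at h2
    have hww : w ^ N * (w⁻¹) ^ N = 1 := by
      rw [← mul_pow, mul_inv_cancel₀ hwne, one_pow]
    have hvN : w ^ N = 1 := by
      have hsq : (w ^ N - 1) ^ 2 = 0 := by
        have h4 : w ^ N * ((algebraMap ℚ ℂ) 2) = w ^ N * (w ^ N + (w⁻¹) ^ N) := by rw [h2]
        have h5 : ((algebraMap ℚ ℂ) 2 : ℂ) = 2 := by norm_num
        rw [h5] at h4
        linear_combination -h4 - hww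
      have := pow_eq_zero_iff (n := 2) (by norm_num) |>.mp hsq
      linear_combination this
    have habsw : ‖w‖ = 1 := by
      exact Complex.norm_eq_one_of_pow_eq_one hvN hN.ne'
    have hzreal : z = ((2 * w.re : ℝ) : ℂ) := by
      rw [← hwz, Complex.inv_eq_conj habsw, Complex.add_conj]
    -- from hd2 : z^n = q
    have h3 := hev _ hd2
    rw [Polynomial.map_sub, Polynomial.map_C, Polynomial.map_pow, map_X, eval_sub, eval_pow,
      eval_X, eval_C, sub_eq_zero] at h3
    -- both z and B are real with the same odd power
    simp only [eq_ratCast] at h3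
    have heq : ((2 * w.re : ℝ) : ℂ) ^ n = ((2 * ξ.re : ℝ) : ℂ) ^ n := by
      rw [← hzreal, ← hBreal, h3, hq]
    have hre : (2 * w.re : ℝ) ^ n = (2 * ξ.re : ℝ) ^ n := by exact_mod_cast heq
    have hfin := (hodd.strictMono_pow (R := ℝ)).injective hre
    rw [hzreal, hBreal, hfin]
  -- p has degree 1
  have hmon : p.Monic := minpoly.monic hBiQ
  have hsplit : Splits (p.map (algebraMap ℚ ℂ)) := IsAlgClosed.splits _
  have hsep : p.Separable := (minpoly.irreducible hBiQ).separable
  have hnodup : (p.map (algebraMap ℚ ℂ)).roots.Nodup :=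
    nodup_roots (hsep.map)
  have hcard : p.natDegree = (p.map (algebraMap ℚ ℂ)).roots.card :=
    (by rw [← natDegree_map (algebraMap ℚ ℂ)]; exact hsplit.natDegree_eq_card_roots)
  have hall : ∀ z ∈ (p.map (algebraMap ℚ ℂ)).roots, z = B := by
    intro z hz
    exact hroots z (isRoot_of_mem_roots hz)
  have hcard1 : (p.map (algebraMap ℚ ℂ)).roots.card ≤ 1 := by
    have hc := Multiset.count_eq_card.mpr (fun z hz => (hall z hz).symm)
    rw [← hc]
    exact Multiset.nodup_iff_count_le_one.mp hnodup B
  have hdeg1 : p.natDegree = 1 := by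
    have h0 := minpoly.natDegree_pos hBiQ
    rw [hcard] at h0 ⊢
    omega
  obtain ⟨c, hc⟩ := (minpoly.natDegree_eq_one_iff).mp hdeg1
  have hciZ : IsIntegral ℤ c := by
    rw [← isIntegral_algebraMap_iff (algebraMap ℚ ℂ).injective, hc]
    exact hBiZ
  obtain ⟨m, hm⟩ := IsIntegrallyClosed.isIntegral_iff.mp hciZ
  refine ⟨m, ?_⟩
  rw [← hc, ← hm]
  simp [map_intCast]

theorem rational_sin_odd_pow_values (n : ℕ) (hn : 0 < n) (hodd : Odd n) (θ : ℚ)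
    (h : ∃ q : ℚ, Real.sin (Real.pi * θ) ^ n = q) :
    Real.sin (Real.pi * θ) ∈ ({0, 1/2, -1/2, 1, -1} : Set ℝ) := by
  obtain ⟨q₀, hq₀⟩ := h
  set s : ℝ := Real.sin (Real.pi * θ) with hs
  obtain ⟨r, hr⟩ : ∃ r : ℚ, r = θ - 1/2 := ⟨_, rfl⟩
  set ξ : ℂ := Complex.exp ((Real.pi * (r : ℝ) : ℝ) * Complex.I) with hξ
  have hξN : ξ ^ (2 * r.den) = 1 := by
    rw [hξ, ← Complex.exp_nat_mul]
    have heq : ((2 * r.den : ℕ) : ℂ) * ((Real.pi * (r : ℝ) : ℝ) * Complex.I)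
        = (r.num : ℤ) * (2 * (Real.pi : ℂ) * Complex.I) := by
      have hd : ((r.den : ℚ) * r) = (r.num : ℚ) := by
        rw [mul_comm]; exact_mod_cast Rat.mul_den_eq_num r
      have hdC : (r.den : ℂ) * (r : ℂ) = (r.num : ℂ) := by exact_mod_cast hd
      push_cast
      linear_combination (2 * (Real.pi : ℂ) * Complex.I) * hdC
    rw [heq, Complex.exp_int_mul_two_pi_mul_I]
  have hB : ξ + ξ⁻¹ = ((2 * s : ℝ) : ℂ) := by
    rw [hξ, ← Complex.exp_neg, ← neg_mul, ← Complex.two_cos, ← Complex.ofReal_cos]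
    have hcs : Real.cos (Real.pi * (r : ℝ)) = s := by
      rw [hr, hs]
      push_cast
      rw [show Real.pi * ((θ : ℝ) - 1/2) = -(Real.pi / 2 - Real.pi * θ) by ring,
        Real.cos_neg, Real.cos_pi_div_two_sub]
    rw [hcs]
    push_cast; ring
  have hq : (ξ + ξ⁻¹) ^ n = ((2 ^ n * q₀ : ℚ) : ℂ) := by
    rw [hB]
    norm_cast
    rw [mul_pow, hq₀]
    push_cast; ring
  obtain ⟨m, hm⟩ := key_root_unity (2 * r.den) n (by positivity) hodd ξ hξN _ hq
  rw [hB] at hm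
  have hms : (m : ℝ) = 2 * s := by exact_mod_cast hm.symm
  have hsb : |s| ≤ 1 := by rw [hs]; exact Real.abs_sin_le_one _
  have hmb : |(m : ℝ)| ≤ 2 := by
    rw [hms, abs_mul, abs_of_nonneg (by norm_num : (0:ℝ) ≤ 2)]
    linarith [abs_nonneg s, hsb]
  have hm1 : m ≤ 2 := by exact_mod_cast (abs_le.mp hmb).2
  have hm2 : -2 ≤ m := by exact_mod_cast (abs_le.mp hmb).1
  have hsm : s = (m : ℝ) / 2 := by linarith [hms]
  clear hm hms hmb hq hB hξN hq₀
  simp only [Set.mem_insert_iff, Set.mem_singleton_iff]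
  interval_cases m <;> norm_num at hsm <;> simp [hsm] <;> norm_num
end

section
/- If n is an even positive integer, θ is a rational number, and sin(πθ)^n is rational, then sin(πθ) ∈ {0, 1/2, -1/2, 1/√2, -1/√2, √3/2, -√3/2, 1, -1}. -/
open Polynomial

-- conjugates of 2 - ζ - ζ⁻¹ have the same shape
lemma conj_form (b : ℕ) (hb : 0 < b) (ζ : ℂ) (hζ : ζ ^ b = 1) (r : ℂ)
    (hr : (Polynomial.aeval r) (minpoly ℚ (2 - ζ - ζ⁻¹)) = 0) :
    ∃ ω : ℂ, ω ^ b = 1 ∧ r = 2 - ω - ω⁻¹ := by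
  classical
  have hζint : IsIntegral ℚ ζ :=
    ⟨X ^ b - 1, monic_X_pow_sub_C 1 hb.ne', by simp [hζ]⟩
  have hmem : (2 - ζ - ζ⁻¹) ∈ IntermediateField.adjoin ℚ ({ζ} : Set ℂ) := by
    have h1 : ζ ∈ IntermediateField.adjoin ℚ ({ζ} : Set ℂ) :=
      IntermediateField.mem_adjoin_simple_self ℚ ζ
    exact sub_mem (sub_mem (ofNat_mem _ 2) h1) (inv_mem h1)
  have hK : ∀ s ∈ ({ζ} : Set ℂ), IsIntegral ℚ s ∧
      ((minpoly ℚ s).map (algebraMap ℚ ℂ)).Splits := by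
    rintro s rfl
    exact ⟨hζint, IsAlgClosed.splits _⟩
  obtain ⟨φ, hφ⟩ :=
    IntermediateField.exists_algHom_adjoin_of_splits_of_aeval hK hmem hr
  set g : IntermediateField.adjoin ℚ ({ζ} : Set ℂ) := ⟨ζ,
    IntermediateField.mem_adjoin_simple_self ℚ ζ⟩ with hg
  refine ⟨φ g, ?_, ?_⟩
  · have : g ^ b = 1 := by ext; simpa [hg]
    rw [← map_pow, this, map_one]
  · have hx : (⟨2 - ζ - ζ⁻¹, hmem⟩ : IntermediateField.adjoin ℚ ({ζ} : Set ℂ)) =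
        2 - g - g⁻¹ := by
      ext
      push_cast [IntermediateField.coe_inv]
      simp [hg]
      norm_cast
    rw [← hφ, hx]
    simp [map_sub, map_inv₀, map_ofNat]

-- a value 2 - ω - ω⁻¹ for a root of unity ω is real in [0, 4]
lemma val_real (b : ℕ) (hb : 0 < b) (ω : ℂ) (hω : ω ^ b = 1) :
    ∃ t : ℝ, (2 - ω - ω⁻¹ : ℂ) = (t : ℂ) ∧ 0 ≤ t ∧ t ≤ 4 := by
  have habs : ‖ω‖ = 1 := by
    have h1 : ‖ω‖ ^ b = 1 := by
      rw [← norm_pow, hω, norm_one]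
    rcases (pow_eq_one_iff_of_ne_zero hb.ne').mp h1 with h | ⟨h, -⟩
    · exact h
    · nlinarith [norm_nonneg ω]
  have hinv : ω⁻¹ = starRingEnd ℂ ω := (Complex.inv_def ω).trans (by
    simp [Complex.normSq_eq_norm_sq, habs])
  refine ⟨2 - 2 * ω.re, ?_, ?_, ?_⟩
  · rw [hinv]
    have := Complex.add_conj ω
    push_cast
    rw [sub_sub, this]
    push_cast
    ring
  · nlinarith [Complex.abs_re_le_norm ω, abs_le.mp (habs ▸ Complex.abs_re_le_norm ω)]
  · nlinarith [abs_le.mp (habs ▸ Complex.abs_re_le_norm ω)]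

theorem rational_sin_even_pow_values (n : ℕ) (hn : 0 < n) (heven : Even n) (θ : ℚ)
    (h : ∃ q : ℚ, Real.sin (Real.pi * θ) ^ n = q) :
    Real.sin (Real.pi * θ) ∈
      ({0, 1/2, -1/2, 1 / Real.sqrt 2, -(1 / Real.sqrt 2),
        Real.sqrt 3 / 2, -(Real.sqrt 3 / 2), 1, -1} : Set ℝ) := by
  classical
  obtain ⟨q, hq⟩ := h
  obtain ⟨m, hm⟩ := heven
  have hm1 : 0 < m := by omega
  set s : ℝ := Real.sin (Real.pi * θ) with hs
  set b : ℕ := θ.den with hbdef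
  have hb : 0 < b := θ.pos
  set ζ : ℂ := Complex.exp (2 * Real.pi * Complex.I * θ) with hzdef
  have hζ : ζ ^ b = 1 := by
    rw [hzdef, ← Complex.exp_nat_mul]
    have key : (b : ℂ) * (2 * Real.pi * Complex.I * θ) =
        (θ.num : ℤ) * (2 * Real.pi * Complex.I) := by
      have h1 : ((θ.den : ℚ) * θ : ℚ) = (θ.num : ℚ) := by
        rw [mul_comm]; exact_mod_cast Rat.mul_den_eq_num θ
      have h2 : ((θ.den : ℂ)) * (θ : ℂ) = ((θ.num : ℂ)) := by exact_mod_cast congrArg (Rat.cast (K := ℂ)) h1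
      rw [hbdef]
      push_cast at h2
      linear_combination (2 * (Real.pi:ℂ) * Complex.I) * h2
    rw [key, Complex.exp_int_mul_two_pi_mul_I]
  -- the key element
  have hX : (2 - ζ - ζ⁻¹ : ℂ) = ((4 * s ^ 2 : ℝ) : ℂ) := by
    have hy : ζ = Complex.exp ((2 * Real.pi * θ : ℝ) * Complex.I) := by
      rw [hzdef]; push_cast; ring_nf
    have hyi : ζ⁻¹ = Complex.exp ((-(2 * Real.pi * θ) : ℝ) * Complex.I) := by
      rw [hy, ← Complex.exp_neg]; push_cast; ring_nf
    rw [hy] at hyi ⊢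
    rw [hyi, Complex.exp_mul_I, Complex.exp_mul_I]
    simp only [Complex.ofReal_neg, Complex.cos_neg, Complex.sin_neg,
      ← Complex.ofReal_cos, ← Complex.ofReal_sin]
    have hsin : (4 * s ^ 2 : ℝ) = 2 - 2 * Real.cos (2 * Real.pi * θ) := by
      have := Real.sin_sq_eq_half_sub (Real.pi * θ)
      have h2 : 2 * (Real.pi * θ) = 2 * Real.pi * θ := by ring
      rw [hs]
      rw [h2] at this
      linarith
    rw [hsin]
    push_cast
    ring
  set x₀ : ℝ := 4 * s ^ 2 with hx₀
  have hx0nn : 0 ≤ x₀ := by positivity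
  have hx0le : x₀ ≤ 4 := by
    have h1 : s ^ 2 ≤ 1 := by
      nlinarith [Real.neg_one_le_sin (Real.pi * θ), Real.sin_le_one (Real.pi * θ), hs]
    simp only [hx₀]; nlinarith
  set q' : ℚ := 4 ^ m * q with hq'def
  have hpowR : x₀ ^ m = (q' : ℝ) := by
    have h1 : (s ^ 2) ^ m = (q : ℝ) := by
      rw [← pow_mul, two_mul, hm] at *
      exact_mod_cast hq
    rw [hx₀, hq'def, mul_pow]
    push_cast
    rw [h1]
  have hC : (2 - ζ - ζ⁻¹ : ℂ) ^ m = ((q' : ℚ) : ℂ) := by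
    rw [hX]
    rw [show ((4 * s ^ 2 : ℝ) : ℂ) = ((x₀ : ℝ) : ℂ) by rw [hx₀]]
    rw [← Complex.ofReal_pow, hpowR]
    norm_cast
  have haev : (Polynomial.aeval (2 - ζ - ζ⁻¹ : ℂ)) ((X : ℚ[X]) ^ m - C q') = 0 := by
    simp only [map_sub, map_pow, aeval_X, aeval_C, hC, sub_eq_zero]
    norm_cast
  have hXint : IsIntegral ℚ (2 - ζ - ζ⁻¹ : ℂ) :=
    ⟨(X : ℚ[X]) ^ m - C q', monic_X_pow_sub_C q' hm1.ne', by
      rw [← Polynomial.aeval_def]; exact haev⟩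
  set p : ℚ[X] := minpoly ℚ (2 - ζ - ζ⁻¹ : ℂ) with hp
  have hdvd : p ∣ (X : ℚ[X]) ^ m - C q' := minpoly.dvd ℚ _ haev
  have hroots : ∀ r ∈ (p.map (algebraMap ℚ ℂ)).roots, r = ((x₀ : ℝ) : ℂ) := by
    intro r hr
    have hr0 : (Polynomial.aeval r) p = 0 := by
      have := (mem_roots (by
        simpa using (Polynomial.map_ne_zero_iff (algebraMap ℚ ℂ).injective).mpr
          (minpoly.ne_zero hXint))).mp hr
      rw [Polynomial.IsRoot, Polynomial.eval_map, ← Polynomial.aeval_def] at this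
      exact this
    have hrm : r ^ m = ((q' : ℚ) : ℂ) := by
      obtain ⟨g, hg⟩ := hdvd
      have h0 : (Polynomial.aeval r) ((X : ℚ[X]) ^ m - C q') = 0 := by
        rw [hg, map_mul, hr0, zero_mul]
      simpa only [map_sub, map_pow, aeval_X, aeval_C, sub_eq_zero,
        Polynomial.aeval_C, eq_ratCast] using h0
    obtain ⟨ω, hω, rfl⟩ := conj_form b hb ζ hζ r hr0
    obtain ⟨t, ht, ht0, ht4⟩ := val_real b hb ω hω
    rw [ht] at hrm ⊢
    have htm : t ^ m = (q' : ℝ) := by exact_mod_cast hrm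
    have hteq : t = x₀ := by
      have hmono := pow_left_strictMonoOn₀ (M₀ := ℝ) (n := m) hm1.ne'
      exact hmono.injOn ht0 hx0nn (htm.trans hpowR.symm)
    rw [hteq]
  have hsep : p.Separable := (minpoly.irreducible hXint).separable
  have hd1 : p.natDegree = 1 := by
    have hcard : p.natDegree = Multiset.card (p.map (algebraMap ℚ ℂ)).roots :=
      by rw [← natDegree_map (algebraMap ℚ ℂ)]; exact (IsAlgClosed.splits _).natDegree_eq_card_roots
    have hnodup : (p.map (algebraMap ℚ ℂ)).roots.Nodup :=
      nodup_roots (hsep.map)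
    have hpos : 0 < p.natDegree := minpoly.natDegree_pos hXint
    have hcount : Multiset.count ((x₀ : ℝ) : ℂ) (p.map (algebraMap ℚ ℂ)).roots =
        Multiset.card (p.map (algebraMap ℚ ℂ)).roots :=
      Multiset.count_eq_card.mpr fun x hx => (hroots x hx).symm
    have hle := Multiset.nodup_iff_count_le_one.mp hnodup ((x₀ : ℝ) : ℂ)
    omega
  obtain ⟨c, hc⟩ := minpoly.natDegree_eq_one_iff.mp hd1
  have hcx : (c : ℝ) = x₀ := by
    have : ((c : ℝ) : ℂ) = ((x₀ : ℝ) : ℂ) := by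
      rw [← hX]
      exact_mod_cast hc
    exact_mod_cast this
  -- integrality over ℤ
  have hζZ : IsIntegral ℤ ζ :=
    ⟨(X : ℤ[X]) ^ b - 1, by simpa using monic_X_pow_sub_C (1 : ℤ) hb.ne', by simp [hζ]⟩
  have hζ0 : ζ ≠ 0 := fun h0 => by
    rw [h0, zero_pow hb.ne'] at hζ; exact zero_ne_one hζ
  have hinv : ζ⁻¹ = ζ ^ (b - 1) := by
    refine inv_eq_of_mul_eq_one_right ?_
    rw [← pow_succ']
    rwa [show b - 1 + 1 = b by omega]
  have h2Z : IsIntegral ℤ (2 : ℂ) := by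
    simpa using isIntegral_algebraMap (R := ℤ) (A := ℂ) (x := (2 : ℤ))
  have hXZ : IsIntegral ℤ (2 - ζ - ζ⁻¹ : ℂ) := by
    rw [hinv]
    exact (h2Z.sub hζZ).sub (hζZ.pow _)
  have hcZ : IsIntegral ℤ c := by
    rw [← hc] at hXZ
    exact (isIntegral_algebraMap_iff (algebraMap ℚ ℂ).injective).mp hXZ
  obtain ⟨k, hk⟩ := IsIntegrallyClosed.isIntegral_iff.mp hcZ
  have hkc : ((k : ℚ) : ℝ) = x₀ := by rw [← hk] at hcx; exact_mod_cast hcx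
  have hk0 : (0 : ℤ) ≤ k := by
    have h1 : (0 : ℝ) ≤ ((k : ℚ) : ℝ) := hkc ▸ hx0nn
    exact_mod_cast h1
  have hk4 : k ≤ 4 := by
    have h1 : ((k : ℚ) : ℝ) ≤ 4 := hkc ▸ hx0le
    exact_mod_cast h1
  have hs2 : 4 * s ^ 2 = (k : ℝ) := by
    rw [← hx₀, ← hkc]; norm_cast
  simp only [Set.mem_insert_iff, Set.mem_singleton_iff]
  have hsqrt2 : Real.sqrt 2 ^ 2 = 2 := Real.sq_sqrt (by norm_num)
  have hsqrt2pos : 0 < Real.sqrt 2 := Real.sqrt_pos.mpr (by norm_num)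
  have hsqrt3 : Real.sqrt 3 ^ 2 = 3 := Real.sq_sqrt (by norm_num)
  have hv2 : (1 / Real.sqrt 2) ^ 2 = 1 / 2 := by
    rw [div_pow, hsqrt2, one_pow]
  have hv3 : (Real.sqrt 3 / 2) ^ 2 = 3 / 4 := by
    rw [div_pow, hsqrt3]; norm_num
  interval_cases k
  · left
    have h1 : s ^ 2 = 0 := by push_cast at hs2; linarith
    exact (pow_eq_zero_iff two_ne_zero).mp h1
  · have h1 : (s - 1/2) * (s + 1/2) = 0 := by push_cast at hs2; linear_combination hs2 / 4
    rcases mul_eq_zero.mp h1 with h2 | h2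
    · exact Or.inr (Or.inl (by linarith))
    · exact Or.inr (Or.inr (Or.inl (by linarith)))
  · have h1 : (s - 1 / Real.sqrt 2) * (s + 1 / Real.sqrt 2) = 0 := by
      push_cast at hs2; linear_combination hs2 / 4 - hv2
    rcases mul_eq_zero.mp h1 with h2 | h2
    · exact Or.inr (Or.inr (Or.inr (Or.inl (by linarith))))
    · exact Or.inr (Or.inr (Or.inr (Or.inr (Or.inl (by linarith)))))
  · have h1 : (s - Real.sqrt 3 / 2) * (s + Real.sqrt 3 / 2) = 0 := by
      push_cast at hs2; linear_combination hs2 / 4 - hv3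
    rcases mul_eq_zero.mp h1 with h2 | h2
    · exact Or.inr (Or.inr (Or.inr (Or.inr (Or.inr (Or.inl (by linarith))))))
    · exact Or.inr (Or.inr (Or.inr (Or.inr (Or.inr (Or.inr (Or.inl (by linarith)))))))
  · have h1 : (s - 1) * (s + 1) = 0 := by push_cast at hs2; linear_combination hs2 / 4
    rcases mul_eq_zero.mp h1 with h2 | h2
    · exact Or.inr (Or.inr (Or.inr (Or.inr (Or.inr (Or.inr (Or.inr (Or.inl (by linarith))))))))
    · exact Or.inr (Or.inr (Or.inr (Or.inr (Or.inr (Or.inr (Or.inr (Or.inr (by linarith))))))))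
end

section
/- If n is an odd positive integer, θ is a rational number with cos(πθ) ≠ 0, and tan(πθ)^n is rational, then tan(πθ) ∈ {0, 1, -1}. -/
open Complex Polynomial IntermediateField

theorem rational_tan_odd_pow_values (n : ℕ) (hn : 0 < n) (hodd : Odd n) (θ : ℚ)
    (hc : Real.cos (Real.pi * θ) ≠ 0)
    (h : ∃ q : ℚ, Real.tan (Real.pi * θ) ^ n = q) :
    Real.tan (Real.pi * θ) ∈ ({0, 1, -1} : Set ℝ) := by
  obtain ⟨q, hq⟩ := h
  set x : ℝ := Real.pi * θ with hx
  set t : ℝ := Real.tan x with ht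
  set z : ℂ := Complex.exp (x * I) with hz
  set c : ℝ := Real.cos x with hcx
  set s : ℝ := Real.sin x with hsx
  have hzcs : z = (c:ℂ) + (s:ℂ)*I := by
    rw [hz, Complex.exp_mul_I, Complex.ofReal_cos, Complex.ofReal_sin]
  have hpy : c^2 + s^2 = 1 := Real.cos_sq_add_sin_sq x
  have hts : t * c = s := by
    rw [ht, Real.tan_eq_sin_div_cos, div_mul_cancel₀ _ hc]
  have hkey : (t:ℂ) * (z^2+1) = (1 - z^2) * I := by
    rw [hzcs]
    simp only [pow_two, Complex.ext_iff]
    constructor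
    · simp
      linear_combination (2*c)*hts - t*hpy
    · simp
      linear_combination (2*s)*hts + hpy
  have hNz : (2 * θ.den : ℕ) ≠ 0 := by positivity
  have hzN : z ^ (2 * θ.den) = 1 := by
    rw [hz, ← Complex.exp_nat_mul]
    have hd : ((θ : ℂ)) * (θ.den : ℂ) = (θ.num : ℂ) := by
      exact_mod_cast congrArg (Rat.cast (K := ℂ)) (Rat.mul_den_eq_num θ)
    have harg : ((2 * θ.den : ℕ) : ℂ) * ((x:ℂ) * I) = (θ.num : ℂ) * (2 * Real.pi * I) := by
      rw [hx]
      push_cast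
      rw [← hd]; ring
    rw [harg, Complex.exp_int_mul_two_pi_mul_I]
  have hzne : z ≠ 0 := Complex.exp_ne_zero _
  have hz2c : z^2 + 1 = 2 * (c:ℂ) * z := by
    rw [hzcs]
    simp only [pow_two, Complex.ext_iff]
    constructor
    · simp
      linear_combination (-1 : ℝ) * hpy
    · simp
      ring
  have hz21 : z^2 + 1 ≠ 0 := by
    rw [hz2c]
    have hcC : ((c:ℂ)) ≠ 0 := by exact_mod_cast hc
    exact mul_ne_zero (mul_ne_zero two_ne_zero hcC) hzne
  set S : Set ℂ := {z, I} with hS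
  have hzS : z ∈ adjoin ℚ S := subset_adjoin _ _ (by simp [hS])
  have hIS : I ∈ adjoin ℚ S := subset_adjoin _ _ (by simp [hS])
  have htval : (t : ℂ) = (1 - z^2) * I * (z^2+1)⁻¹ := by
    field_simp [hz21]
    linear_combination hkey
  have htS : (t : ℂ) ∈ adjoin ℚ S := by
    rw [htval]
    exact mul_mem (mul_mem (sub_mem (one_mem _) (pow_mem hzS 2)) hIS)
      (inv_mem (add_mem (pow_mem hzS 2) (one_mem _)))
  have hint : ∀ w ∈ S, IsIntegral ℚ w ∧ ((minpoly ℚ w).map (algebraMap ℚ ℂ)).Splits := by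
    intro w hw
    refine ⟨?_, IsAlgClosed.splits _⟩
    rcases hw with hw | hw
    · subst hw
      exact ⟨X ^ (2*θ.den) - C 1, monic_X_pow_sub_C _ hNz, by simp [hzN]⟩
    · simp only [Set.mem_singleton_iff] at hw
      subst hw
      refine ⟨X ^ 2 + C 1, ?_, by simp⟩
      have := monic_X_pow_add_C (R := ℚ) (1:ℚ) (two_ne_zero)
      simpa using this
  have hqC : (t : ℂ) ^ n = (q : ℂ) := by exact_mod_cast congrArg Complex.ofReal hq
  have hP : (Polynomial.aeval (t:ℂ)) (X ^ n - C q) = 0 := by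
    simp [hqC]
  have hti : IsIntegral ℚ (t : ℂ) :=
    ⟨X ^ n - C q, monic_X_pow_sub_C _ hn.ne', by simpa using hP⟩
  have hdvd : minpoly ℚ (t:ℂ) ∣ X ^ n - C q := minpoly.dvd _ _ hP
  have hroots : ∀ w : ℂ, (Polynomial.aeval w) (minpoly ℚ (t:ℂ)) = 0 → w = (t:ℂ) := by
    intro w hw
    obtain ⟨φ, hφ⟩ := IntermediateField.exists_algHom_adjoin_of_splits_of_aeval hint htS hw
    set Z : ℂ := φ ⟨z, hzS⟩ with hZ
    set Ii : ℂ := φ ⟨I, hIS⟩ with hIi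
    have hZN : Z ^ (2*θ.den) = 1 := by
      rw [hZ, ← map_pow]
      have h1 : (⟨z, hzS⟩ : adjoin ℚ S) ^ (2*θ.den) = 1 := by
        ext; push_cast; exact hzN
      rw [h1, map_one]
    have hIi2 : Ii ^ 2 = -1 := by
      rw [hIi, ← map_pow]
      have h1 : (⟨I, hIS⟩ : adjoin ℚ S) ^ 2 = -1 := by
        ext; push_cast; simp [Complex.I_sq]
      rw [h1, map_neg, map_one]
    have hkeyφ : w * (Z*Z + 1) = (1 - Z*Z) * Ii := by
      have hsub : (⟨(t:ℂ), htS⟩ : adjoin ℚ S) * (⟨z, hzS⟩ * ⟨z, hzS⟩ + 1)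
          = (1 - ⟨z, hzS⟩ * ⟨z, hzS⟩) * ⟨I, hIS⟩ := by
        ext; push_cast; linear_combination hkey
      have h2 := congrArg φ hsub
      simp only [map_mul, map_add, map_sub, map_one] at h2
      rw [hφ] at h2
      exact h2
    have hkeyφ' : w * (Z^2 + 1) = (1 - Z^2) * Ii := by
      rw [pow_two]; exact hkeyφ
    have hIine : Ii ≠ 0 := by
      intro h0; rw [h0] at hIi2
      norm_num at hIi2
    have hZ21 : Z^2 + 1 ≠ 0 := by
      intro h0
      have hZ2 : Z^2 = -1 := by linear_combination h0
      rw [h0, mul_zero, hZ2] at hkeyφ'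
      have : Ii = 0 := by linear_combination -hkeyφ' / 2
      exact hIine this
    have hZne : Z ≠ 0 := by
      intro h0
      rw [h0] at hZN
      simp [hNz] at hZN
    have hconjZ : (starRingEnd ℂ) Z = Z⁻¹ := by
      have hnorm : ‖Z‖ = 1 := Complex.norm_eq_one_of_pow_eq_one hZN hNz
      exact (Complex.inv_eq_conj hnorm).symm
    have hconjI : (starRingEnd ℂ) Ii = -Ii := by
      have h1 : (Ii - I) * (Ii + I) = 0 := by
        linear_combination hIi2 - Complex.I_sq
      rcases mul_eq_zero.mp h1 with h1 | h1
      · have h2 : Ii = I := by linear_combination h1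
        rw [h2]; simp
      · have h2 : Ii = -I := by linear_combination h1
        rw [h2]; simp
    have hinv : Z⁻¹ * Z = 1 := inv_mul_cancel₀ hZne
    have hwreal : (starRingEnd ℂ) w = w := by
      have hconj := congrArg (starRingEnd ℂ) hkeyφ'
      simp only [map_mul, map_add, map_sub, map_one, map_pow, hconjZ, hconjI] at hconj
      have e1 := congrArg (fun u => u * Z^2) hconj
      have hcancel : (starRingEnd ℂ) w * (Z^2+1) = w * (Z^2+1) := by
        linear_combination e1 - hkeyφ' + (Ii - (starRingEnd ℂ) w) * (Z⁻¹*Z + 1) * hinv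
      exact mul_right_cancel₀ hZ21 hcancel
    obtain ⟨wr, hwr⟩ := Complex.conj_eq_iff_real.mp hwreal
    have hwn : w ^ n = (q : ℂ) := by
      obtain ⟨k, hk⟩ := hdvd
      have := congrArg (Polynomial.aeval w) hk
      rw [map_mul, hw, zero_mul, map_sub, aeval_X_pow, aeval_C] at this
      simp only [eq_ratCast] at this
      linear_combination this
    have hwrn : wr ^ n = (q : ℝ) := by
      rw [hwr] at hwn
      exact_mod_cast hwn
    have : wr = t := by
      have hinj : Function.Injective (fun a : ℝ => a ^ n) := (Odd.strictMono_pow hodd).injective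
      apply hinj
      simp only [hwrn, hq]
    rw [hwr, this]
  -- the minimal polynomial has degree one, so t is rational
  have hdeg1 : (minpoly ℚ (t:ℂ)).natDegree = 1 := by
    set p := minpoly ℚ (t:ℂ) with hp
    have hpirr := minpoly.irreducible hti
    have hsep : p.Separable := hpirr.separable
    have hsplit : (p.map (algebraMap ℚ ℂ)).Splits := IsAlgClosed.splits _
    have hcard : p.natDegree = (p.map (algebraMap ℚ ℂ)).roots.card :=
      (natDegree_map (algebraMap ℚ ℂ)).symm.trans hsplit.natDegree_eq_card_roots
    have hnodup : (p.map (algebraMap ℚ ℂ)).roots.Nodup := nodup_roots (hsep.map)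
    have hmem : ∀ w ∈ (p.map (algebraMap ℚ ℂ)).roots, w = (t:ℂ) := by
      intro w hwmem
      apply hroots
      rw [mem_roots (map_ne_zero (minpoly.ne_zero hti))] at hwmem
      rw [aeval_def, ← eval_map]
      exact hwmem
    have hle : (p.map (algebraMap ℚ ℂ)).roots.toFinset.card ≤ 1 := by
      apply Finset.card_le_one.mpr
      intro a ha b hb
      rw [Multiset.mem_toFinset] at ha hb
      rw [hmem a ha, hmem b hb]
    rw [Multiset.toFinset_card_of_nodup hnodup] at hle
    have hpos := minpoly.natDegree_pos hti
    rw [hp] at hcard hle ⊢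
    omega
  obtain ⟨r, hr⟩ := minpoly.natDegree_eq_one_iff.mp hdeg1
  have hrt : (r : ℝ) = t := by
    have h1 : ((r:ℚ) : ℂ) = ((t:ℝ) : ℂ) := by rw [← hr]; simp [eq_ratCast]
    exact_mod_cast h1
  -- Niven-type finish
  have hne1r : (1:ℚ) + r^2 ≠ 0 := by positivity
  set ρ : ℚ := 2*(1-r^2)/(1+r^2) with hρ
  have hnet : (1:ℝ) + t^2 ≠ 0 := by positivity
  have hre : (ρ:ℝ)*(1+t^2) = 2*(1-t^2) := by
    rw [hρ, ← hrt]
    push_cast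
    field_simp
  have h1c : c^2*(1+t^2) = 1 := by
    linear_combination hpy + (t*c + s) * hts
  have h3 : (ρ:ℝ) = 2*(1-t^2)*c^2 := by
    calc (ρ:ℝ) = (ρ:ℝ) * (c^2*(1+t^2)) := by rw [h1c, mul_one]
    _ = ((ρ:ℝ)*(1+t^2))*c^2 := by ring
    _ = 2*(1-t^2)*c^2 := by rw [hre]
  have hcs : (ρ:ℝ) = 2*(c^2 - s^2) := by
    rw [h3]
    linear_combination (-2)*(t*c + s)*hts
  -- z⁻¹
  have hzinv : z * ((c:ℂ) - s*I) = 1 := by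
    rw [hzcs]
    simp only [Complex.ext_iff]
    constructor
    · simp
      linear_combination hpy
    · simp
      ring
  have hzinveq : z⁻¹ = (c:ℂ) - s*I := inv_eq_of_mul_eq_one_right hzinv
  have hρC : (ρ:ℂ) = z^2 + (z⁻¹)^2 := by
    have hrr : ((ρ:ℝ) : ℂ) = (ρ:ℂ) := by push_cast; ring
    rw [← hrr, hcs, hzinveq, hzcs]
    simp only [pow_two, Complex.ext_iff]
    constructor
    · simp
      ring
    · simp
      ring
  -- integrality
  have hzi : IsIntegral ℤ z :=
    ⟨X ^ (2*θ.den) - C 1, monic_X_pow_sub_C _ hNz, by simp [hzN]⟩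
  have hzinvi : IsIntegral ℤ (z⁻¹) := by
    have h1 : z * z^(2*θ.den - 1) = 1 := by
      rw [← pow_succ']
      have : 2*θ.den - 1 + 1 = 2*θ.den := by omega
      rw [this, hzN]
    rw [inv_eq_of_mul_eq_one_right h1]
    exact hzi.pow _
  have hρiC : IsIntegral ℤ ((ρ:ℂ)) := by
    rw [hρC]
    exact (hzi.pow 2).add (hzinvi.pow 2)
  have hρint : IsIntegral ℤ ρ := by
    have hmap : algebraMap ℚ ℂ ρ = (ρ:ℂ) := eq_ratCast _ _
    rw [← hmap] at hρiC
    exact (isIntegral_algebraMap_iff (algebraMap ℚ ℂ).injective).mp hρiC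
  obtain ⟨m, hm⟩ := IsIntegrallyClosed.isIntegral_iff.mp hρint
  have hmq : (m:ℚ) = ρ := by rw [← hm]; simp
  have hb1 : (ρ:ℝ) ≤ 2 := by rw [hcs]; nlinarith [sq_nonneg s]
  have hb2 : (-2:ℝ) ≤ (ρ:ℝ) := by rw [hcs]; nlinarith [sq_nonneg c]
  have hm1 : m ≤ 2 := by
    have : ((m:ℚ):ℝ) ≤ 2 := by rw [hmq]; exact_mod_cast hb1
    exact_mod_cast this
  have hm2 : -2 ≤ m := by
    have : (-2:ℝ) ≤ ((m:ℚ):ℝ) := by rw [hmq]; exact_mod_cast hb2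
    exact_mod_cast this
  have hmr : (m:ℚ)*(1+r^2) = 2*(1-r^2) := by
    rw [hmq, hρ]
    field_simp
  have hsq3 : ∀ u : ℚ, u^2 ≠ 3 := by
    intro u hu
    have h3 : Irrational (Real.sqrt 3) := by
      simpa using (Nat.prime_three).irrational_sqrt
    apply h3
    have hu' : ((u:ℝ))^2 = 3 := by exact_mod_cast hu
    have hs3 : Real.sqrt 3 = |(u:ℝ)| := by
      rw [← hu', Real.sqrt_sq_eq_abs]
    rw [hs3]
    exact ⟨|u|, by push_cast; rfl⟩
  have hmem : t = 0 ∨ t = 1 ∨ t = -1 := by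
    interval_cases m
    · -- m = -2
      exfalso
      push_cast at hmr
      linarith
    · -- m = -1 : r^2 = 3
      exfalso
      apply hsq3 r
      push_cast at hmr
      linarith
    · -- m = 0 : r^2 = 1
      have : (r-1)*(r+1) = 0 := by push_cast at hmr; linear_combination hmr/2
      rcases mul_eq_zero.mp this with h1 | h1
      · right; left
        have : r = 1 := by linear_combination h1
        rw [← hrt, this]; norm_num
      · right; right
        have : r = -1 := by linear_combination h1
        rw [← hrt, this]; norm_num
    · -- m = 1 : r^2 = 1/3
      exfalso
      apply hsq3 (3*r)
      push_cast at hmr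
      linear_combination 3*hmr
    · -- m = 2 : r = 0
      left
      have : r^2 = 0 := by push_cast at hmr; linarith
      have hr0 : r = 0 := by
        have := sq_eq_zero_iff.mp this
        exact this
      rw [← hrt, hr0]; norm_num
  simpa [Set.mem_insert_iff] using hmem
end

section
/- If n is an even positive integer, θ is a rational number with cos(πθ) ≠ 0, and tan(πθ)^n is rational, then tan(πθ) ∈ {0, 1/√3, -1/√3, 1, -1, √3, -√3}. -/
open Polynomial Polynomial.Chebyshev Real

lemma cos_two_pi_rat_of_tan_pow (θ : ℚ) (m : ℕ) (hm : m ≠ 0) (q : ℚ)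
    (hc : Real.cos (Real.pi * θ) ≠ 0)
    (hq : ((1 - Real.cos (2 * (Real.pi * θ))) / (1 + Real.cos (2 * (Real.pi * θ)))) ^ m = q) :
    ∃ r : ℚ, Real.cos (2 * (Real.pi * θ)) = r := by
  set c : ℝ := Real.cos (2 * (Real.pi * θ)) with hcdef
  set b : ℕ := θ.den with hbdef
  have hbpos : 0 < b := θ.pos
  have hbθ : (b : ℝ) * θ = (θ.num : ℝ) := by
    have : (b : ℚ) * θ = (θ.num : ℚ) := by
      rw [hbdef, mul_comm]; exact_mod_cast Rat.mul_den_eq_num θ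
    exact_mod_cast congrArg (fun x : ℚ => (x : ℝ)) this
  have h1c : 1 + c = 2 * Real.cos (Real.pi * θ) ^ 2 := by
    rw [hcdef, Real.cos_two_mul]; ring
  have h1cpos : 0 < 1 + c := by rw [h1c]; positivity
  have h1cne : 1 + c ≠ 0 := h1cpos.ne'
  have hsnn : 0 ≤ (1 - c) / (1 + c) := by
    apply div_nonneg _ h1cpos.le
    rw [hcdef, Real.cos_two_mul]
    nlinarith [Real.sin_sq (Real.pi * θ), sq_nonneg (Real.sin (Real.pi * θ))]
  -- c is a root of T b - 1
  have hT : (aeval c) (T ℚ (b : ℤ) - 1) = 0 := by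
    have h1 : (aeval c) (T ℚ (b : ℤ)) = ((T ℚ (b : ℤ)).map (algebraMap ℚ ℝ)).eval c := by
      rw [eval_map]; rfl
    rw [map_sub, h1, map_T]
    have := T_real_cos (2 * (Real.pi * θ)) (b : ℤ)
    rw [hcdef, this]
    have harg : ((b : ℤ) : ℝ) * (2 * (Real.pi * θ)) = (θ.num : ℝ) * (2 * Real.pi) := by
      push_cast; rw [← hbθ]; ring
    rw [harg, Real.cos_int_mul_two_pi]; simp
  -- T b - 1 is nonzero
  have hTne : (T ℚ (b : ℤ) - 1 : ℚ[X]) ≠ 0 := by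
    intro h0
    have : ((T ℚ (b : ℤ) - 1 : ℚ[X]).map (algebraMap ℚ ℝ)).eval
        (Real.cos (Real.pi / b)) = 0 := by rw [h0]; simp
    rw [Polynomial.map_sub, map_T, Polynomial.map_one, eval_sub, eval_one,
      T_real_cos] at this
    have h2 : Real.cos (((b : ℤ) : ℝ) * (Real.pi / b)) = 1 := by linarith
    rw [show ((b : ℤ) : ℝ) * (Real.pi / b) = Real.pi by
      push_cast; field_simp] at h2
    rw [Real.cos_pi] at h2; norm_num at h2
  have halg : IsIntegral ℚ c := (IsAlgebraic.isIntegral ⟨_, hTne, hT⟩)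
  set p : ℚ[X] := minpoly ℚ c with hpdef
  set F : ℚ[X] := (1 - X) ^ m - C q * (1 + X) ^ m with hFdef
  have hFc : (aeval c) F = 0 := by
    rw [hFdef]
    simp only [map_sub, map_pow, map_add, map_one, map_mul, Polynomial.aeval_C, aeval_X]
    rw [eq_ratCast (algebraMap ℚ ℝ) q]
    have h3 : (1 - c) ^ m = q * (1 + c) ^ m := by
      rw [div_pow, div_eq_iff (pow_ne_zero _ h1cne)] at hq; linarith [hq]
    rw [h3]; ring
  have hdvd1 : p ∣ T ℚ (b : ℤ) - 1 := minpoly.dvd ℚ c hT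
  have hdvd2 : p ∣ F := minpoly.dvd ℚ c hFc
  -- every complex root of p equals c
  have hroot : ∀ z : ℂ, (aeval z) p = 0 → z = (c : ℂ) := by
    intro z hz
    have hz1 : (aeval z) (T ℚ (b : ℤ) - 1) = 0 := by
      obtain ⟨g, hg⟩ := hdvd1; rw [hg, map_mul, hz, zero_mul]
    have hz2 : (aeval z) F = 0 := by
      obtain ⟨g, hg⟩ := hdvd2; rw [hg, map_mul, hz, zero_mul]
    obtain ⟨w, hw⟩ := Complex.cos_surjective z
    have hTz : (aeval z) (T ℚ (b : ℤ)) = 1 := by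
      rw [map_sub, map_one, sub_eq_zero] at hz1; exact hz1
    have haevalT : (aeval z) (T ℚ (b : ℤ)) = (T ℂ (b : ℤ)).eval z := by
      rw [aeval_def, eval₂_eq_eval_map, map_T]
    rw [haevalT, ← hw, T_complex_cos] at hTz
    obtain ⟨k, hk⟩ := Complex.cos_eq_one_iff.mp hTz
    have hbne : ((b : ℤ) : ℂ) ≠ 0 := by
      simpa using hbpos.ne'
    have hwval : w = ((k : ℂ) * (2 * (Real.pi : ℂ))) / ((b : ℤ) : ℂ) := by
      rw [eq_div_iff hbne]; linear_combination -hk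
    set y : ℝ := Real.cos ((k : ℝ) * (2 * Real.pi) / b) with hydef
    have hzy : z = (y : ℂ) := by
      rw [← hw, hwval, hydef, Complex.ofReal_cos]
      push_cast; ring_nf
    have hFy : (1 - y) ^ m = q * (1 + y) ^ m := by
      rw [hFdef] at hz2
      simp only [map_sub, map_pow, map_add, map_one, map_mul, Polynomial.aeval_C, aeval_X] at hz2
      rw [eq_ratCast (algebraMap ℚ ℂ) q, hzy, sub_eq_zero] at hz2
      exact_mod_cast hz2
    -- y ≠ -1
    have hy1 : -1 ≤ y := Real.neg_one_le_cos _
    have hy2 : y ≤ 1 := Real.cos_le_one _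
    have hyne : y ≠ -1 := by
      intro h
      rw [h] at hFy
      simp at hFy
      norm_num [hm] at hFy
    have h1ypos : 0 < 1 + y := by
      rcases lt_or_eq_of_le hy1 with h | h
      · linarith
      · exact absurd h.symm hyne
    have hynn : 0 ≤ (1 - y) / (1 + y) := by
      apply div_nonneg _ h1ypos.le; linarith
    have hqy : ((1 - y) / (1 + y)) ^ m = (q : ℝ) := by
      rw [div_pow, hFy]; field_simp
    -- uniqueness of nonneg m-th roots
    have hss : (1 - y) / (1 + y) = (1 - c) / (1 + c) := by
      have := pow_left_strictMonoOn₀ (M₀ := ℝ) hm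
      apply this.injOn hynn hsnn
      simp only [hqy, hq]
    have hyc : y = c := by
      rw [div_eq_div_iff h1ypos.ne' h1cne] at hss
      nlinarith [hss]
    rw [hzy, hyc]
  -- now p has degree 1
  have hpmonic : p.Monic := minpoly.monic halg
  have hpsep : p.Separable := (minpoly.irreducible halg).separable
  have hsplit : (p.map (algebraMap ℚ ℂ)).Splits := IsAlgClosed.splits (p.map (algebraMap ℚ ℂ))
  have hcard : p.natDegree = Multiset.card (p.map (algebraMap ℚ ℂ)).roots :=
    (natDegree_map (algebraMap ℚ ℂ)).symm.trans hsplit.natDegree_eq_card_roots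
  have hnodup : (p.map (algebraMap ℚ ℂ)).roots.Nodup :=
    nodup_roots (hpsep.map)
  have hsub : ∀ z ∈ (p.map (algebraMap ℚ ℂ)).roots, z = (c : ℂ) := by
    intro z hzr
    apply hroot
    have := isRoot_of_mem_roots hzr
    rwa [IsRoot, eval_map, ← aeval_def] at this
  have hcard1 : Multiset.card (p.map (algebraMap ℚ ℂ)).roots ≤ 1 := by
    have hss : (p.map (algebraMap ℚ ℂ)).roots.toFinset ⊆ {(c : ℂ)} := by
      intro z hz
      simp only [Multiset.mem_toFinset] at hz
      simp [hsub z hz]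
    calc Multiset.card (p.map (algebraMap ℚ ℂ)).roots
        = (p.map (algebraMap ℚ ℂ)).roots.toFinset.card :=
          (Multiset.toFinset_card_of_nodup hnodup).symm
      _ ≤ 1 := by simpa using Finset.card_le_card hss
  have hdeg : p.natDegree = 1 := by
    have h2 := minpoly.natDegree_pos halg
    rw [← hpdef] at h2
    omega
  -- extract the rational value
  have hp_eq : p = C (p.coeff 1) * X + C (p.coeff 0) :=
    eq_X_add_C_of_natDegree_le_one (by omega)
  have hc1 : p.coeff 1 = 1 := by
    have := hpmonic.coeff_natDegree
    rwa [hdeg] at this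
  have haev : (aeval c) p = 0 := minpoly.aeval ℚ c
  rw [hp_eq, hc1] at haev
  simp only [map_add, map_mul, Polynomial.aeval_C, aeval_X, map_one, one_mul] at haev
  refine ⟨-(p.coeff 0), ?_⟩
  rw [eq_ratCast (algebraMap ℚ ℝ) (p.coeff 0)] at haev
  push_cast
  linarith [haev]

lemma two_cos_int (θ : ℚ) (r : ℚ) (hr : Real.cos (2 * (Real.pi * θ)) = r) :
    ∃ z : ℤ, (z : ℚ) = 2 * r := by
  set b : ℕ := θ.den with hbdef
  have hbpos : 0 < b := θ.pos
  have hbθ : (b : ℝ) * θ = (θ.num : ℝ) := by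
    have : (b : ℚ) * θ = (θ.num : ℚ) := by
      rw [hbdef, mul_comm]; exact_mod_cast Rat.mul_den_eq_num θ
    exact_mod_cast congrArg (fun x : ℚ => (x : ℝ)) this
  set ζ : ℂ := Complex.exp ((2 * (Real.pi * θ) : ℝ) * Complex.I) with hζdef
  have hζb : ζ ^ b = 1 := by
    rw [hζdef, ← Complex.exp_nat_mul]
    rw [show (b : ℂ) * (((2 * (Real.pi * θ) : ℝ)) * Complex.I)
        = (θ.num : ℂ) * (2 * (Real.pi : ℂ) * Complex.I) by
      push_cast
      have : ((b : ℝ) : ℂ) * ((θ : ℝ) : ℂ) = ((θ.num : ℝ) : ℂ) := by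
        exact_mod_cast congrArg (fun x : ℝ => (x : ℂ)) hbθ
      push_cast at this
      linear_combination 2 * Real.pi * Complex.I * this]
    exact Complex.exp_int_mul_two_pi_mul_I θ.num
  have hζne : ζ ≠ 0 := Complex.exp_ne_zero _
  have hζint : IsIntegral ℤ ζ := by
    refine ⟨Polynomial.X ^ b - Polynomial.C 1, Polynomial.monic_X_pow_sub_C 1 hbpos.ne', ?_⟩
    simp [hζb]
  have hζinv : ζ⁻¹ = ζ ^ (b - 1) := by
    have hmul : ζ ^ (b - 1) * ζ = 1 := by
      rw [← pow_succ, Nat.sub_add_cancel hbpos]; exact hζb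
    exact ((eq_inv_of_mul_eq_one_left hmul)).symm
  have hsum : ((2 * r : ℚ) : ℂ) = ζ + ζ⁻¹ := by
    have h2c := Complex.two_cos (((2 * (Real.pi * θ) : ℝ)) : ℂ)
    rw [← Complex.ofReal_cos, hr] at h2c
    rw [hζdef]
    push_cast at h2c ⊢
    rw [h2c, neg_mul, Complex.exp_neg]
  have hint : IsIntegral ℤ ((2 * r : ℚ) : ℂ) := by
    rw [hsum, hζinv]
    exact hζint.add (hζint.pow _)
  have : IsIntegral ℤ (2 * r : ℚ) := by
    have hinj : Function.Injective (algebraMap ℚ ℂ) := (algebraMap ℚ ℂ).injective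
    rw [← isIntegral_algebraMap_iff hinj]
    convert hint using 1
    exact eq_ratCast (algebraMap ℚ ℂ) _
  obtain ⟨z, hz⟩ := IsIntegrallyClosed.isIntegral_iff.mp this
  exact ⟨z, by exact_mod_cast hz⟩

theorem rational_tan_even_pow_values (n : ℕ) (hn : 0 < n) (heven : Even n) (θ : ℚ)
    (hc : Real.cos (Real.pi * θ) ≠ 0)
    (h : ∃ q : ℚ, Real.tan (Real.pi * θ) ^ n = q) :
    Real.tan (Real.pi * θ) ∈
      ({0, 1 / Real.sqrt 3, -(1 / Real.sqrt 3), 1, -1,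
        Real.sqrt 3, -Real.sqrt 3} : Set ℝ) := by
  obtain ⟨q, hq⟩ := h
  obtain ⟨m, hnm⟩ := heven
  have hm : m ≠ 0 := by omega
  set x : ℝ := Real.pi * θ with hxdef
  set t : ℝ := Real.tan x with htdef
  set c : ℝ := Real.cos (2 * x) with hcdef
  have h1c : 1 + c = 2 * Real.cos x ^ 2 := by rw [hcdef, Real.cos_two_mul]; ring
  have h1m : 1 - c = 2 * Real.sin x ^ 2 := by
    rw [hcdef, Real.cos_two_mul]
    nlinarith [Real.sin_sq x]
  have h1cpos : 0 < 1 + c := by rw [h1c]; positivity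
  have ht2 : t ^ 2 = (1 - c) / (1 + c) := by
    rw [htdef, Real.tan_eq_sin_div_cos, div_pow, h1c, h1m,
      mul_div_mul_left _ _ (two_ne_zero)]
  have hq' : ((1 - c) / (1 + c)) ^ m = (q : ℝ) := by
    rw [← ht2, ← pow_mul]
    rw [show 2 * m = n by omega]
    exact hq
  obtain ⟨r, hr⟩ := cos_two_pi_rat_of_tan_pow θ m hm q hc hq'
  obtain ⟨z, hz⟩ := two_cos_int θ r hr
  have hrc : c = (r : ℝ) := hr
  have habs : |(r : ℝ)| ≤ 1 := by rw [← hrc, hcdef]; exact Real.abs_cos_le_one _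
  have hrne : (r : ℝ) ≠ -1 := by
    intro hcontra
    rw [← hrc] at hcontra
    rw [hcontra] at h1cpos
    norm_num at h1cpos
  rw [abs_le] at habs
  have hrq : -1 ≤ r ∧ r ≤ 1 := ⟨by exact_mod_cast habs.1, by exact_mod_cast habs.2⟩
  have hzb : -2 ≤ z ∧ z ≤ 2 := by
    constructor <;> [exact_mod_cast (by linarith [hrq.1, hz.le, hz.ge] : (-2:ℚ) ≤ z);
      exact_mod_cast (by linarith [hrq.2, hz.le, hz.ge] : (z:ℚ) ≤ 2)]
  have hrval : r = -1/2 ∨ r = 0 ∨ r = 1/2 ∨ r = 1 := by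
    obtain ⟨hl, hu⟩ := hzb
    interval_cases z <;> push_cast at hz
    · exfalso; apply hrne
      have : r = -1 := by linarith [hz.le, hz.ge]
      exact_mod_cast congrArg (fun y : ℚ => (y:ℝ)) this
    · left; linarith [hz.le, hz.ge]
    · right; left; linarith [hz.le, hz.ge]
    · right; right; left; linarith [hz.le, hz.ge]
    · right; right; right; linarith [hz.le, hz.ge]
  have hs3 : Real.sqrt 3 ^ 2 = 3 := Real.sq_sqrt (by norm_num)
  have hs3pos : (0:ℝ) < Real.sqrt 3 := Real.sqrt_pos.mpr (by norm_num)
  simp only [Set.mem_insert_iff, Set.mem_singleton_iff]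
  rcases hrval with h' | h' | h' | h'
  · -- c = -1/2, t^2 = 3
    have hcval : c = -1/2 := by rw [hrc, h']; norm_num
    have ht3 : t ^ 2 = Real.sqrt 3 ^ 2 := by
      rw [ht2, hcval, hs3]; norm_num
    rcases sq_eq_sq_iff_eq_or_eq_neg.mp ht3 with h'' | h''
    · exact Or.inr (Or.inr (Or.inr (Or.inr (Or.inr (Or.inl h'')))))
    · exact Or.inr (Or.inr (Or.inr (Or.inr (Or.inr (Or.inr h'')))))
  · -- c = 0, t^2 = 1
    have hcval : c = 0 := by rw [hrc, h']; norm_num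
    have ht1 : t ^ 2 = (1:ℝ) ^ 2 := by rw [ht2, hcval]; norm_num
    rcases sq_eq_sq_iff_eq_or_eq_neg.mp ht1 with h'' | h''
    · exact Or.inr (Or.inr (Or.inr (Or.inl h'')))
    · exact Or.inr (Or.inr (Or.inr (Or.inr (Or.inl h''))))
  · -- c = 1/2, t^2 = 1/3
    have hcval : c = 1/2 := by rw [hrc, h']; norm_num
    have htt : t ^ 2 = (1 / Real.sqrt 3) ^ 2 := by
      rw [ht2, hcval, div_pow, hs3]; norm_num
    rcases sq_eq_sq_iff_eq_or_eq_neg.mp htt with h'' | h''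
    · exact Or.inr (Or.inl h'')
    · exact Or.inr (Or.inr (Or.inl h''))
  · -- c = 1, t^2 = 0
    have hcval : c = 1 := by rw [hrc, h']; norm_num
    have ht0 : t ^ 2 = 0 := by rw [ht2, hcval]; norm_num
    exact Or.inl (pow_eq_zero_iff (two_ne_zero) |>.mp ht0)
end

section
/- Let n ≥ 2 be an integer and α a positive rational number such that α^(k/n) is irrational for every k with 1 ≤ k ≤ n − 1. Then the polynomial X^n − α is irreducible over ℚ. -/
open Polynomial

lemma factor_abs_coeff (n : ℕ) (hn : 2 ≤ n) (α : ℚ) (hα : 0 < α)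
    (g : Polynomial ℚ) (hg : g.Monic) (hdvd : g ∣ (X ^ n - C α))
    : |((g.coeff 0 : ℚ) : ℝ)| = (α : ℝ) ^ ((g.natDegree : ℝ) / (n : ℝ)) := by
  set d := g.natDegree with hd
  set G : Polynomial ℂ := g.map (algebraMap ℚ ℂ) with hG
  have hGmonic : G.Monic := hg.map _
  have hGdeg : G.natDegree = d := by simp [hG, natDegree_map, hd]
  have hsplit : Splits G := IsAlgClosed.splits G
  have hcard : G.roots.card = d := by
    rw [← hGdeg]; exact (splits_iff_card_roots).mp hsplit
  have hGeq : G = (G.roots.map fun a => X - C a).prod :=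
    hsplit.eq_prod_roots_of_monic hGmonic
  -- each root has absolute value α ^ (1/n)
  have hroot : ∀ r ∈ G.roots, ‖r‖ = (α : ℝ) ^ ((n : ℝ)⁻¹) := by
    intro r hr
    have hr' : G.eval r = 0 := (isRoot_of_mem_roots hr)
    have hpdvd : G ∣ (X ^ n - C (α : ℂ)) := by
      have := Polynomial.map_dvd (algebraMap ℚ ℂ) hdvd
      simpa [Polynomial.map_sub, Polynomial.map_pow] using this
    obtain ⟨q, hq⟩ := hpdvd
    have hrn : r ^ n = (α : ℂ) := by
      have : ((X ^ n - C (α : ℂ)).eval r) = 0 := by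
        rw [hq, eval_mul, hr', zero_mul]
      simpa [sub_eq_zero] using this
    have habs : ‖r‖ ^ n = (α : ℝ) := by
      have := congrArg (‖·‖) hrn
      rw [norm_pow] at this
      rw [this, show ((α : ℂ)) = (((α : ℝ) : ℂ)) by push_cast; ring,
        Complex.norm_real, Real.norm_eq_abs, abs_of_pos (by exact_mod_cast hα)]
    have h1 : ‖r‖ = (‖r‖ ^ n) ^ ((n : ℝ)⁻¹) :=
      (Real.pow_rpow_inv_natCast (norm_nonneg r) (by omega)).symm
    rw [h1, habs]
  -- coeff 0
  have hcoeff : ((g.coeff 0 : ℚ) : ℂ) = G.coeff 0 := by simp [hG, coeff_map]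
  have heval : G.coeff 0 = ((G.roots.map fun a => -a).prod) := by
    rw [coeff_zero_eq_eval_zero]
    conv_lhs => rw [hGeq]
    rw [eval_multiset_prod]
    congr 1
    rw [Multiset.map_map]
    congr 1
    ext a
    simp
  have habs0 : ‖G.coeff 0‖ = ((α : ℝ) ^ ((n : ℝ)⁻¹)) ^ d := by
    rw [heval, show ‖(G.roots.map fun a => -a).prod‖ = (normHom : ℂ →*₀ ℝ) (G.roots.map fun a => -a).prod from rfl,
      map_multiset_prod, Multiset.map_map]
    rw [← hcard]
    have hrep : (Multiset.map (fun a => ‖-a‖) G.roots) =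
        Multiset.replicate G.roots.card ((α : ℝ) ^ ((n : ℝ)⁻¹)) := by
      rw [← Multiset.card_map (fun a => ‖-a‖) G.roots]
      apply Multiset.eq_replicate_of_mem
      intro x hx
      simp only [Multiset.mem_map] at hx
      obtain ⟨r, hr, rfl⟩ := hx
      simp [hroot r hr]
    rw [show (normHom : ℂ →*₀ ℝ) ∘ (fun a : ℂ => -a) = fun a => ‖-a‖ from rfl,
      hrep, Multiset.prod_replicate]
  have : |((g.coeff 0 : ℚ) : ℝ)| = ((α : ℝ) ^ ((n : ℝ)⁻¹)) ^ d := by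
    rw [← habs0, ← hcoeff, show (((g.coeff 0 : ℚ)) : ℂ) = ((((g.coeff 0 : ℚ) : ℝ)) : ℂ) by push_cast; ring,
      Complex.norm_real, Real.norm_eq_abs]
  rw [this, ← Real.rpow_natCast ((α : ℝ) ^ ((n : ℝ)⁻¹)) d,
    ← Real.rpow_mul (le_of_lt (by exact_mod_cast hα))]
  congr 1
  field_simp

theorem binomial_irreducible (n : ℕ) (hn : 2 ≤ n) (α : ℚ) (hα : 0 < α)
    (hirr : ∀ k : ℕ, 1 ≤ k → k ≤ n - 1 → Irrational ((α : ℝ) ^ ((k : ℝ) / (n : ℝ)))) :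
    Irreducible (Polynomial.X ^ n - Polynomial.C α : Polynomial ℚ) := by
  have hmonic : (X ^ n - C α : Polynomial ℚ).Monic := monic_X_pow_sub_C α (by omega)
  have hdeg : (X ^ n - C α : Polynomial ℚ).natDegree = n := natDegree_X_pow_sub_C
  rw [hmonic.irreducible_iff_natDegree]
  refine ⟨fun h => ?_, ?_⟩
  · rw [h, natDegree_one] at hdeg; omega
  · rintro f g hf hg he
    by_contra hcon
    push_neg at hcon
    obtain ⟨hf0, hg0⟩ := hcon
    have hsum : f.natDegree + g.natDegree = n := by
      rw [← hdeg, ← he, hf.natDegree_mul hg]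
    have hgdvd : g ∣ (X ^ n - C α) := ⟨f, by rw [← he, mul_comm]⟩
    have key := factor_abs_coeff n hn α hα g hg hgdvd
    have h1 : 1 ≤ g.natDegree := by omega
    have h2 : g.natDegree ≤ n - 1 := by omega
    exact (hirr g.natDegree h1 h2) ⟨|g.coeff 0|, by rw [← key]; push_cast; ring⟩
end

section
/- Let n ≥ 2 be an integer and α a positive rational number such that α^(k/n) is irrational for every k with 1 ≤ k ≤ n − 1. Then the field extension ℚ(α^(1/n)) of ℚ generated by the real n-th root of α has degree n over ℚ. -/
open IntermediateField in
theorem nth_root_degree (n : ℕ) (hn : 2 ≤ n) (α : ℚ) (hα : 0 < α)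
    (hirr : ∀ k : ℕ, 1 ≤ k → k ≤ n - 1 → Irrational ((α : ℝ) ^ ((k : ℝ) / (n : ℝ)))) :
    Module.finrank ℚ
      (IntermediateField.adjoin ℚ ({(α : ℝ) ^ ((1 : ℝ) / (n : ℝ))} : Set ℝ)) = n := by
  have hn0 : n ≠ 0 := by omega
  set x : ℝ := (α : ℝ) ^ ((1 : ℝ) / (n : ℝ)) with hxdef
  have hα' : (0 : ℝ) < (α : ℝ) := by exact_mod_cast hα
  have hxpow : x ^ n = (α : ℝ) := by
    rw [hxdef, one_div]
    exact Real.rpow_inv_natCast_pow hα'.le hn0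
  -- x is integral over ℚ
  have hint : IsIntegral ℚ x := by
    refine ⟨Polynomial.X ^ n - Polynomial.C α, Polynomial.monic_X_pow_sub_C α hn0, ?_⟩
    simp [hxpow]
  have hmindvd : minpoly ℚ x ∣ Polynomial.X ^ n - Polynomial.C α :=
    minpoly.dvd ℚ x (by simp [hxpow])
  -- the degree
  have hfin : Module.finrank ℚ ℚ⟮x⟯ = (minpoly ℚ x).natDegree :=
    IntermediateField.adjoin.finrank hint
  set d : ℕ := (minpoly ℚ x).natDegree with hd
  have hd1 : 1 ≤ d := (minpoly.natDegree_pos hint)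
  have hdn : d ≤ n := by
    have := Polynomial.natDegree_le_of_dvd hmindvd (Polynomial.X_pow_sub_C_ne_zero (by omega) α)
    simpa using this
  -- norm argument
  have := IntermediateField.adjoin.finiteDimensional hint
  set g : ℚ⟮x⟯ := IntermediateField.AdjoinSimple.gen ℚ x with hg
  have hgn : g ^ n = algebraMap ℚ ℚ⟮x⟯ α := by
    apply Subtype.ext
    push_cast
    simpa [hg] using hxpow
  set N : ℚ := Algebra.norm ℚ g with hN
  have hkey : N ^ n = α ^ d := by
    rw [hN, ← map_pow, hgn, Algebra.norm_algebraMap, hfin]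
  have hkeyR : |(N : ℝ)| ^ n = (α : ℝ) ^ d := by
    rw [← abs_pow]
    have : ((N : ℝ)) ^ n = ((α : ℝ)) ^ d := by exact_mod_cast congrArg (Rat.cast : ℚ → ℝ) hkey
    rw [this, abs_of_pos (pow_pos hα' d)]
  have hrat : (α : ℝ) ^ ((d : ℝ) / (n : ℝ)) = |(N : ℝ)| := by
    rw [div_eq_mul_inv, Real.rpow_mul hα'.le, Real.rpow_natCast, ← hkeyR,
      ← Real.rpow_natCast (|(N : ℝ)|) n, ← Real.rpow_mul (abs_nonneg _),
      mul_inv_cancel₀ (by exact_mod_cast hn0 : (n : ℝ) ≠ 0), Real.rpow_one]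
  have hdeq : d = n := by
    by_contra hne
    have hdn' : d ≤ n - 1 := by omega
    have := hirr d hd1 hdn'
    rw [hrat, ← Rat.cast_abs] at this
    exact this.ne_rat |N| rfl
  have : (IntermediateField.adjoin ℚ ({x} : Set ℝ)) = ℚ⟮x⟯ := rfl
  rw [this, hfin]; exact hdeq
end

section
/- Let n ≥ 2 be an integer and α a positive rational number such that α^(k/n) is irrational for every k with 1 ≤ k ≤ n − 1. Then the real n-th root α^(1/n) does not lie in the n-th cyclotomic field ℚ(ζ_n). -/
open Polynomial IntermediateField

theorem nth_root_not_in_nth_cyclotomic (n : ℕ) (hn : 2 ≤ n) (α : ℚ) (hα : 0 < α)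
    (hirr : ∀ k : ℕ, 1 ≤ k → k ≤ n - 1 → Irrational ((α : ℝ) ^ ((k : ℝ) / (n : ℝ))))
    (ζ : ℂ) (hζ : IsPrimitiveRoot ζ n) :
    (((α : ℝ) ^ ((1 : ℝ) / (n : ℝ)) : ℝ) : ℂ) ∉
      IntermediateField.adjoin ℚ ({ζ} : Set ℂ) := by
  intro hmem
  have hn0 : (n : ℝ) ≠ 0 := by positivity
  set x : ℝ := (α : ℝ) ^ ((1 : ℝ) / (n : ℝ)) with hx
  have hαR : (0:ℝ) < (α:ℝ) := by exact_mod_cast hα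
  have hx0 : 0 ≤ x := Real.rpow_nonneg hαR.le _
  have hxn : x ^ n = (α : ℝ) := by
    rw [hx, ← Real.rpow_natCast ((α:ℝ) ^ ((1:ℝ)/(n:ℝ))) n, ← Real.rpow_mul hαR.le,
      one_div, inv_mul_cancel₀ hn0, Real.rpow_one]
  set z : ℂ := ((x : ℝ) : ℂ) with hz
  have hzn : z ^ n = (α : ℂ) := by
    rw [hz, ← Complex.ofReal_pow, hxn]; norm_num
  -- z is integral
  have hint : IsIntegral ℚ z := by
    refine ⟨X ^ n - C α, monic_X_pow_sub_C α (by omega), ?_⟩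
    simp [hzn]
  set p : ℚ[X] := minpoly ℚ z with hp
  set d : ℕ := p.natDegree with hd
  have hd1 : 1 ≤ d := minpoly.natDegree_pos hint
  -- degree bound via the cyclotomic field
  have hζint : IsIntegral ℚ ζ := by
    refine ⟨X ^ n - 1, monic_X_pow_sub_C 1 (by omega), ?_⟩
    simp [hζ.pow_eq_one]
  haveI : FiniteDimensional ℚ (IntermediateField.adjoin ℚ ({ζ} : Set ℂ)) :=
    IntermediateField.adjoin.finiteDimensional hζint
  have hle : ℚ⟮z⟯ ≤ IntermediateField.adjoin ℚ ({ζ} : Set ℂ) := by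
    rw [IntermediateField.adjoin_le_iff]; simpa using hmem
  have hdim1 : d = Module.finrank ℚ ℚ⟮z⟯ := (IntermediateField.adjoin.finrank hint).symm
  have hdim2 : Module.finrank ℚ (IntermediateField.adjoin ℚ ({ζ} : Set ℂ)) = Nat.totient n := by
    rw [IntermediateField.adjoin.finrank hζint,
      ← Polynomial.cyclotomic_eq_minpoly_rat hζ (by omega), Polynomial.natDegree_cyclotomic]
  have hdle : d ≤ n - 1 := by
    have h1 : Module.finrank ℚ ℚ⟮z⟯ ≤
        Module.finrank ℚ (IntermediateField.adjoin ℚ ({ζ} : Set ℂ)) :=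
      LinearMap.finrank_le_finrank_of_injective
        (f := (IntermediateField.inclusion hle).toLinearMap)
        (IntermediateField.inclusion hle).injective
    have h2 : Nat.totient n ≤ n - 1 := Nat.le_sub_one_of_lt (Nat.totient_lt n (by omega))
    omega
  -- now show x ^ d is rational, contradicting hirr d
  have hdvd : p ∣ X ^ n - C α := minpoly.dvd ℚ z (by simp [hzn])
  set pC : ℂ[X] := p.map (algebraMap ℚ ℂ) with hpC
  have hpCmonic : pC.Monic := (minpoly.monic hint).map _
  have hpC0 : pC ≠ 0 := hpCmonic.ne_zero
  have hsplits : pC.Splits := IsAlgClosed.splits pC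
  have hcard : Multiset.card pC.roots = d := by
    have h := Polynomial.splits_iff_card_roots.mp hsplits
    rw [h, hpC, (minpoly.monic hint).natDegree_map]
  have habs : ∀ r ∈ pC.roots, ‖r‖ = x := by
    intro r hr
    have hroot : pC.IsRoot r := Polynomial.isRoot_of_mem_roots hr
    have hdvdC : pC ∣ (X ^ n - C (α : ℂ)) := by
      have := Polynomial.map_dvd (algebraMap ℚ ℂ) hdvd
      simpa [Polynomial.map_sub, Polynomial.map_pow] using this
    have hrn : r ^ n = (α : ℂ) := by
      have h2 : (X ^ n - C (α : ℂ)).IsRoot r := hroot.dvd hdvdC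
      have h3 : r ^ n - (α : ℂ) = 0 := by
        have h4 := h2
        rw [Polynomial.IsRoot.def, Polynomial.eval_sub, Polynomial.eval_pow,
          Polynomial.eval_X, Polynomial.eval_C] at h4
        exact h4
      linear_combination h3
    have habsn : (‖r‖) ^ n = (α : ℝ) := by
      rw [← norm_pow, hrn, ← Complex.ofReal_ratCast, Complex.norm_real, Real.norm_eq_abs, abs_of_pos hαR]
    calc ‖r‖ = ((‖r‖) ^ n) ^ ((1:ℝ)/(n:ℝ)) := by
          rw [← Real.rpow_natCast (‖r‖) n, ← Real.rpow_mul (norm_nonneg r),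
            mul_one_div, div_self hn0, Real.rpow_one]
      _ = x := by rw [habsn]
  have hprod : ‖pC.coeff 0‖ = x ^ d := by
    rw [hsplits.coeff_zero_eq_prod_roots_of_monic hpCmonic] at *
    rw [norm_mul, norm_pow, norm_neg, norm_one, one_pow, one_mul,
      show ‖pC.roots.prod‖ = (pC.roots.map (fun r => ‖r‖)).prod from
        map_multiset_prod (normHom (α := ℂ)) pC.roots]
    have : pC.roots.map (fun r => ‖r‖) = Multiset.replicate d x := by
      rw [← hcard, ← Multiset.card_map (fun r : ℂ => ‖r‖) pC.roots]
      exact Multiset.eq_replicate_card.mpr (by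
        intro b hb
        obtain ⟨r, hr, rfl⟩ := Multiset.mem_map.mp hb
        exact habs r hr)
    rw [this, Multiset.prod_replicate]
  have hrat : ¬ Irrational (x ^ d) := by
    rw [← hprod]
    have : pC.coeff 0 = ((p.coeff 0 : ℚ) : ℂ) := by
      rw [hpC, Polynomial.coeff_map]; norm_num
    rw [this]
    have : ‖((p.coeff 0 : ℚ) : ℂ)‖ = ((|p.coeff 0| : ℚ) : ℝ) := by
      push_cast
      rw [← Complex.ofReal_ratCast, Complex.norm_real, Real.norm_eq_abs]
    rw [this]
    exact Rat.not_irrational _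
  apply hrat
  have : x ^ d = (α : ℝ) ^ ((d : ℝ) / (n : ℝ)) := by
    rw [hx, ← Real.rpow_natCast ((α:ℝ) ^ ((1:ℝ)/(n:ℝ))) d, ← Real.rpow_mul hαR.le,
      one_div, inv_mul_eq_div]
  rw [this]
  exact hirr d hd1 hdle
end

section
/- Let n ≥ 3 be an integer and α a positive rational number such that α^(k/n) is irrational for every k with 1 ≤ k ≤ n − 1. Then the Galois group of the Galois extension K = ℚ(α^(1/n), ζ_n) over ℚ is non-abelian. -/
open Polynomial IntermediateField

set_option maxHeartbeats 2000000 in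
theorem galois_group_nonabelian (n : ℕ) (hn : 3 ≤ n) (α : ℚ) (hα : 0 < α)
    (hirr : ∀ k : ℕ, 1 ≤ k → k ≤ n - 1 → Irrational ((α : ℝ) ^ ((k : ℝ) / (n : ℝ))))
    (ζ : ℂ) (hζ : IsPrimitiveRoot ζ n)
    (K : IntermediateField ℚ ℂ)
    (hK : K = IntermediateField.adjoin ℚ
      ({(((α : ℝ) ^ ((1 : ℝ) / (n : ℝ)) : ℝ) : ℂ), ζ} : Set ℂ)) :
    ∃ σ τ : K ≃ₐ[ℚ] K, σ * τ ≠ τ * σ := by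
  haveI : NeZero n := ⟨by omega⟩
  have hn0 : (n : ℝ) ≠ 0 := by exact_mod_cast (by omega : n ≠ 0)
  have hαR : (0 : ℝ) < (α : ℝ) := by exact_mod_cast hα
  set a : ℝ := (α : ℝ) ^ ((1 : ℝ) / (n : ℝ)) with ha_def
  have hapos : 0 < a := Real.rpow_pos_of_pos hαR _
  have hapow : a ^ n = (α : ℝ) := by
    rw [ha_def, ← Real.rpow_natCast ((α : ℝ) ^ ((1:ℝ)/(n:ℝ))) n, ← Real.rpow_mul hαR.le]
    rw [one_div_mul_cancel hn0, Real.rpow_one]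
  set a' : ℂ := ((a : ℝ) : ℂ) with ha'_def
  have ha'pow : a' ^ n = ((α : ℚ) : ℂ) := by
    rw [ha'_def, ← Complex.ofReal_pow, hapow]; norm_cast
  have ha'ne : a' ≠ 0 := by
    simp only [ha'_def, ne_eq, Complex.ofReal_eq_zero]; exact hapos.ne'
  have hζn : ζ ^ n = 1 := hζ.pow_eq_one
  subst hK
  set p : ℚ[X] := X ^ n - C α with hp_def
  have hpne : p ≠ 0 := by
    have := X_pow_sub_C_ne_zero (by omega : 0 < n) α
    simpa [hp_def] using this
  have haroot : a' ∈ p.rootSet ℂ := by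
    rw [mem_rootSet]
    refine ⟨hpne, ?_⟩
    simp [hp_def, ha'pow]
  have hζaroot : ζ * a' ∈ p.rootSet ℂ := by
    rw [mem_rootSet]
    refine ⟨hpne, ?_⟩
    simp [hp_def, mul_pow, hζn, ha'pow]
  have hset : IntermediateField.adjoin ℚ ({a', ζ} : Set ℂ)
      = IntermediateField.adjoin ℚ (p.rootSet ℂ) := by
    apply le_antisymm
    · rw [IntermediateField.adjoin_le_iff]
      intro x hx
      rcases hx with rfl | rfl
      · exact subset_adjoin ℚ _ haroot
      · have hx : x = (x * a') / a' := by field_simp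
        rw [hx]
        exact div_mem (subset_adjoin ℚ _ hζaroot) (subset_adjoin ℚ _ haroot)
    · rw [IntermediateField.adjoin_le_iff]
      intro z hz
      rw [mem_rootSet] at hz
      have hzn : z ^ n = ((α : ℚ) : ℂ) := by
        have := hz.2
        simp [hp_def, sub_eq_zero] at this
        exact this
      have hdiv : (z / a') ^ n = 1 := by
        rw [div_pow, hzn, ha'pow, div_self]
        rw [← ha'pow]; exact pow_ne_zero _ ha'ne
      obtain ⟨i, _, hi⟩ := hζ.eq_pow_of_pow_eq_one hdiv
      have hz' : z = ζ ^ i * a' := by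
        rw [hi]; field_simp
      rw [hz']
      exact mul_mem (pow_mem (subset_adjoin ℚ _ (by simp)) i)
        (subset_adjoin ℚ _ (by simp))
  have hsf : IsSplittingField ℚ (IntermediateField.adjoin ℚ ({a', ζ} : Set ℂ)) p := by
    rw [hset]
    exact IntermediateField.adjoin_rootSet_isSplittingField (IsAlgClosed.splits _)
  set K := IntermediateField.adjoin ℚ ({a', ζ} : Set ℂ) with hKdef
  haveI : IsSplittingField ℚ K p := hsf
  haveI : Normal ℚ K := Normal.of_isSplittingField p
  haveI : FiniteDimensional ℚ K := IsSplittingField.finiteDimensional K p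
  haveI : IsGalois ℚ K := ⟨⟩
  -- complex conjugation restricted to K
  set c : K ≃ₐ[ℚ] K := (Complex.conjAe.restrictScalars ℚ).restrictNormal K with hc_def
  have hc : ∀ x : K, ((c x : ℂ)) = (starRingEnd ℂ) (x : ℂ) := fun x =>
    AlgEquiv.restrictNormal_commutes (Complex.conjAe.restrictScalars ℚ) K x
  by_contra hcon
  push_neg at hcon
  have ha'K : a' ∈ K := subset_adjoin ℚ _ (by simp)
  set aK : K := ⟨a', ha'K⟩ with haK_def
  have haKn : aK ^ n = algebraMap ℚ K α := by
    apply Subtype.ext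
    push_cast [haK_def]
    rw [ha'pow]
    rfl
  have key : ∀ τ : K ≃ₐ[ℚ] K, τ (aK * aK) = aK * aK := by
    intro τ
    have h1 : ((τ aK : ℂ)) ^ n = ((α : ℚ) : ℂ) := by
      have : τ (aK ^ n) = algebraMap ℚ K α := by rw [haKn]; exact τ.commutes α
      rw [map_pow] at this
      have := congrArg (fun x : K => (x : ℂ)) this
      push_cast at this
      simpa using this
    have h2 : (starRingEnd ℂ) ((τ aK : ℂ)) = ((τ aK : ℂ)) := by
      have hcaK : c aK = aK := by
        apply Subtype.ext
        rw [hc aK]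
        simp [haK_def, ha'_def, Complex.conj_ofReal]
      have : c (τ aK) = τ aK := by
        have := hcon c τ
        calc c (τ aK) = (c * τ) aK := rfl
          _ = (τ * c) aK := by rw [this]
          _ = τ (c aK) := rfl
          _ = τ aK := by rw [hcaK]
      calc (starRingEnd ℂ) ((τ aK : ℂ)) = ((c (τ aK) : ℂ)) := (hc (τ aK)).symm
        _ = ((τ aK : ℂ)) := by rw [this]
    obtain ⟨r, hr⟩ := Complex.conj_eq_iff_real.mp h2
    have hrn : r ^ n = (α : ℝ) := by
      have : ((r : ℂ)) ^ n = ((α : ℝ) : ℂ) := by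
        rw [← hr, h1]; norm_cast
      exact_mod_cast this
    have habs : |r| = a := by
      have h1 : |r| ^ n = a ^ n := by
        rw [← abs_pow, hrn, hapow, abs_of_pos hαR]
      exact (pow_left_strictMonoOn₀ (by omega : n ≠ 0)).injOn (abs_nonneg r) hapos.le h1
    have hr2 : r * r = a * a := by
      have := congrArg (fun x => x * x) habs
      simpa [abs_mul_abs_self] using this
    apply Subtype.ext
    rw [map_mul]
    push_cast
    rw [hr]
    show ((r : ℝ) : ℂ) * ((r : ℝ) : ℂ) = ((a : ℝ) : ℂ) * ((a : ℝ) : ℂ)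
    exact_mod_cast hr2
  have hmem : aK * aK ∈ (⊥ : IntermediateField ℚ K) := by
    rw [← IsGalois.fixedField_fixingSubgroup (⊥ : IntermediateField ℚ K)]
    exact fun g => key g
  obtain ⟨q, hq⟩ := IntermediateField.mem_bot.mp hmem
  have hqR : ((q : ℚ) : ℝ) = a * a := by
    have h1 := congrArg (fun x : ↥K => (x : ℂ)) hq
    have e1 : ((algebraMap ℚ ↥K q : ↥K) : ℂ) = ((q : ℚ) : ℂ) := by
      simp [IsScalarTower.algebraMap_apply ℚ ↥K ℂ]
    have e2 : ((aK * aK : ↥K) : ℂ) = ((a : ℝ) : ℂ) * ((a : ℝ) : ℂ) := rfl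
    have h2 : ((q : ℚ) : ℂ) = ((a : ℝ) : ℂ) * ((a : ℝ) : ℂ) := by
      rw [← e1, ← e2]; exact h1
    exact_mod_cast h2
  have h2irr : Irrational ((α : ℝ) ^ ((2 : ℝ) / (n : ℝ))) := by
    have := hirr 2 (by omega) (by omega)
    simpa using this
  have haa : a * a = (α : ℝ) ^ ((2 : ℝ) / (n : ℝ)) := by
    rw [ha_def, ← Real.rpow_add hαR]
    ring_nf
  exact h2irr ⟨q, by rw [← haa, hqR]⟩
end
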